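/- arXiv:1010.1030 — 9 statements merged into one kernel-verified Lean document; each statement's English description precedes it below -/
import Mathlib

section
/- Let $A$ and $B$ be complex matrices of size $d \times d'$. There exists a Hermitian $d' \times d'$ matrix $L$ with $A = BL$ if and only if $AB^\dagger = BA^\dagger$ and the column space (image) of $A$ is contained in the image of $B$. -/
open Matrix BigOperators Filter
open scoped ComplexOrder

noncomputable section

/-- Apply a real function to a matrix via the spectral theorem (0 if not Hermitian). -/
def matFun {n : Type} [Fintype n] [DecidableEq n] (f : ℝ → ℝ)
    (A : Matrix n n ℂ) : Matrix n n ℂ :=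
  if hA : A.IsHermitian then hA.cfc f else 0

/-- Matrix logarithm (via spectral calculus). -/
def mlog {n : Type} [Fintype n] [DecidableEq n] (A : Matrix n n ℂ) : Matrix n n ℂ :=
  matFun Real.log A

/-- Matrix square root (via spectral calculus). -/
def msqrt {n : Type} [Fintype n] [DecidableEq n] (A : Matrix n n ℂ) : Matrix n n ℂ :=
  matFun Real.sqrt A

/-- Moore–Penrose (generalized) inverse of a Hermitian matrix. -/
def mpinv {n : Type} [Fintype n] [DecidableEq n] (A : Matrix n n ℂ) : Matrix n n ℂ :=
  matFun (fun t => if t = 0 then 0 else t⁻¹) A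

/-- Density operator predicate. -/
def IsDensity {n : Type} [Fintype n] [DecidableEq n] (ρ : Matrix n n ℂ) : Prop :=
  ρ.PosSemidef ∧ ρ.trace = 1

/-- Support of a matrix, as the range of the associated linear map. -/
def msupp {n : Type} [Fintype n] [DecidableEq n] (ρ : Matrix n n ℂ) :
    Submodule ℂ (n → ℂ) :=
  LinearMap.range ρ.mulVecLin

/-- Trace norm. -/
def traceNorm {n : Type} [Fintype n] [DecidableEq n] (A : Matrix n n ℂ) : ℝ :=
  (Matrix.trace (msqrt (Aᴴ * A))).re

/-- Umegaki relative entropy. -/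
def relEnt {n : Type} [Fintype n] [DecidableEq n] (ρ σ : Matrix n n ℂ) : ℝ :=
  (Matrix.trace (ρ * (mlog ρ - mlog σ))).re

/-- RLD (Belavkin–Staszewski) relative entropy. -/
def DR {n : Type} [Fintype n] [DecidableEq n] (ρ σ : Matrix n n ℂ) : ℝ :=
  (Matrix.trace (ρ * mlog (msqrt ρ * mpinv σ * msqrt ρ))).re

/-- Classical relative entropy of probability vectors. -/
def classRelEnt {X : Type} [Fintype X] (p q : X → ℝ) : ℝ :=
  ∑ x, p x * Real.log (p x / q x)

/-- Probability vector predicate. -/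
def IsProb {X : Type} [Fintype X] (p : X → ℝ) : Prop :=
  (∀ x, 0 ≤ p x) ∧ ∑ x, p x = 1

/-- A CPTP map given by a Kraus representation. -/
def IsCPTP {n m : Type} [Fintype n] [DecidableEq n] [Fintype m] [DecidableEq m]
    (Λ : Matrix n n ℂ → Matrix m m ℂ) : Prop :=
  ∃ (k : ℕ) (K : Fin k → Matrix m n ℂ),
    (∑ i, (K i)ᴴ * K i = 1) ∧ ∀ A, Λ A = ∑ i, K i * A * (K i)ᴴ

/-- n-fold tensor power of a matrix. -/
def tensorPow {d : Type} [Fintype d] [DecidableEq d]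
    (ρ : Matrix d d ℂ) (n : ℕ) : Matrix (Fin n → d) (Fin n → d) ℂ :=
  fun i j => ∏ k, ρ (i k) (j k)

/-- Outer product |u⟩⟨u|. -/
def outer {n : Type} [Fintype n] (u : n → ℂ) : Matrix n n ℂ :=
  Matrix.vecMulVec u (star u)

/-- RLD Fisher information of a state `ρ` with tangent `X` (where the RLD exists,
this equals `tr ρ L† L` with `X = L ρ`). -/
def JR {n : Type} [Fintype n] [DecidableEq n] (ρ X : Matrix n n ℂ) : ℝ :=
  (Matrix.trace (X * mpinv ρ * X)).re

end

section Aux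

variable {n : Type} [Fintype n] [DecidableEq n]

private lemma hermCfc_mul {A : Matrix n n ℂ} (hA : A.IsHermitian) (f g : ℝ → ℝ) :
    hA.cfc f * hA.cfc g = hA.cfc (fun x => f x * g x) := by
  simp only [Matrix.IsHermitian.cfc, Unitary.conjStarAlgAut_apply]
  have key : ∀ {a b c d e f : Matrix n n ℂ},
      (a * b * c) * (d * e * f) = a * (b * (c * d) * e) * f := by
    intros; simp only [mul_assoc]
  rw [key]
  simp only [SetLike.coe_mem, Unitary.star_mul_self_of_mem, mul_one,
    Matrix.diagonal_mul_diagonal]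
  congr! with i
  simp

private lemma hermCfc_herm {A : Matrix n n ℂ} (hA : A.IsHermitian) (f : ℝ → ℝ) :
    (hA.cfc f).IsHermitian := by
  have hD : (Matrix.diagonal (RCLike.ofReal ∘ f ∘ hA.eigenvalues) : Matrix n n ℂ)ᴴ
      = Matrix.diagonal (RCLike.ofReal ∘ f ∘ hA.eigenvalues) := by
    rw [Matrix.diagonal_conjTranspose]
    have hfun : star ((RCLike.ofReal ∘ f ∘ hA.eigenvalues) : n → ℂ)
        = RCLike.ofReal ∘ f ∘ hA.eigenvalues := by
      funext i
      simp [Function.comp, Pi.star_apply, RCLike.star_def, RCLike.conj_ofReal]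
    rw [hfun]
  show (hA.cfc f)ᴴ = hA.cfc f
  simp only [Matrix.IsHermitian.cfc, Unitary.conjStarAlgAut_apply, Matrix.star_eq_conjTranspose,
    Matrix.conjTranspose_mul, hD, Matrix.conjTranspose_conjTranspose, Matrix.mul_assoc]

private lemma hermCfc_id {A : Matrix n n ℂ} (hA : A.IsHermitian) :
    hA.cfc (fun x => x) = A := by
  simp only [Matrix.IsHermitian.cfc]
  conv_rhs => rw [hA.spectral_theorem]
  rfl

private lemma mpinv_herm' {A : Matrix n n ℂ} (hA : A.IsHermitian) :
    (mpinv A).IsHermitian := by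
  rw [mpinv, matFun, dif_pos hA]
  exact hermCfc_herm hA _

private lemma mul_mpinv_mul_self {A : Matrix n n ℂ} (hA : A.IsHermitian) :
    A * mpinv A * A = A := by
  have e : hA.cfc (fun x => x) * hA.cfc (fun t => if t = 0 then 0 else t⁻¹)
      * hA.cfc (fun x => x) = hA.cfc (fun x => x) := by
    rw [hermCfc_mul, hermCfc_mul]
    have : (fun x : ℝ => (x * if x = 0 then 0 else x⁻¹) * x) = (fun x : ℝ => x) := by
      funext t
      by_cases ht : t = 0
      · simp [ht]
      · rw [if_neg ht, mul_inv_cancel₀ ht, one_mul]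
    rw [this]
  rw [hermCfc_id hA] at e
  rw [mpinv, matFun, dif_pos hA]
  exact e

/-- If the range of `M` is contained in that of `G` and `G * Gp * G = G`, then
`G * Gp` fixes `M`. -/
private lemma fix_of_range_le {d d' : ℕ} {G Gp : Matrix (Fin d) (Fin d) ℂ}
    (h : G * Gp * G = G) {M : Matrix (Fin d) (Fin d') ℂ}
    (hM : LinearMap.range M.mulVecLin ≤ LinearMap.range G.mulVecLin) :
    G * Gp * M = M := by
  ext i j
  have hcol : M.mulVecLin (Pi.single j 1) ∈ LinearMap.range G.mulVecLin :=
    hM ⟨Pi.single j 1, rfl⟩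
  obtain ⟨z, hz⟩ := hcol
  simp only [Matrix.mulVecLin_apply] at hz
  have h1 : (G * Gp * M) *ᵥ Pi.single j 1 = M *ᵥ Pi.single j 1 := by
    calc (G * Gp * M) *ᵥ Pi.single j 1
        = (G * Gp) *ᵥ (M *ᵥ Pi.single j 1) := (Matrix.mulVec_mulVec _ _ _).symm
      _ = (G * Gp) *ᵥ (G *ᵥ z) := by rw [hz]
      _ = (G * Gp * G) *ᵥ z := Matrix.mulVec_mulVec _ _ _
      _ = G *ᵥ z := by rw [h]
      _ = M *ᵥ Pi.single j 1 := hz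
  have h2 := congrFun h1 i
  simpa using h2

private lemma range_mul_conjTranspose_self {d d' : ℕ} (B : Matrix (Fin d) (Fin d') ℂ) :
    LinearMap.range (B * Bᴴ).mulVecLin = LinearMap.range B.mulVecLin := by
  apply Submodule.eq_of_le_of_finrank_le
  · rw [Matrix.mulVecLin_mul]
    exact LinearMap.range_comp_le_range _ _
  · have h1 : (B * Bᴴ).rank = B.rank := Matrix.rank_self_mul_conjTranspose B
    rw [Matrix.rank, Matrix.rank] at h1
    exact h1.ge


private lemma herm_aux {m : Type} [Fintype m] [DecidableEq m] (C Q : Matrix m m ℂ)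
    (hQ : Qᴴ = Q) (hCQ : C * Q = Q * Cᴴ) : (C + (1 - Q) * Cᴴ).IsHermitian := by
  show (C + (1 - Q) * Cᴴ)ᴴ = C + (1 - Q) * Cᴴ
  rw [Matrix.conjTranspose_add, Matrix.conjTranspose_mul, Matrix.conjTranspose_sub,
    Matrix.conjTranspose_one, Matrix.conjTranspose_conjTranspose, hQ]
  rw [sub_mul, mul_sub, mul_one, one_mul, hCQ]
  abel

private lemma bl_aux {d d' : ℕ} (A B : Matrix (Fin d) (Fin d') ℂ)
    (C Q : Matrix (Fin d') (Fin d') ℂ) (hBC : B * C = A) (hBQ : B * Q = B) :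
    A = B * (C + (1 - Q) * Cᴴ) := by
  rw [Matrix.mul_add, hBC, sub_mul, one_mul, Matrix.mul_sub, ← Matrix.mul_assoc, hBQ,
    sub_self, add_zero]

end Aux

/-- There is a Hermitian `L` with `A = B * L` iff `A * Bᴴ = B * Aᴴ`
and the column space of `A` is contained in that of `B`. -/
theorem stmt_0 {d d' : ℕ} (A B : Matrix (Fin d) (Fin d') ℂ) :
    (∃ L : Matrix (Fin d') (Fin d') ℂ, L.IsHermitian ∧ A = B * L) ↔
      (A * Bᴴ = B * Aᴴ ∧
        LinearMap.range A.mulVecLin ≤ LinearMap.range B.mulVecLin) := by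
  constructor
  · rintro ⟨L, hL, rfl⟩
    refine ⟨?_, ?_⟩
    · rw [Matrix.conjTranspose_mul, hL.eq, Matrix.mul_assoc]
    · rw [Matrix.mulVecLin_mul]
      exact LinearMap.range_comp_le_range _ _
  · rintro ⟨hAB, hrange⟩
    have hG : (B * Bᴴ).IsHermitian := Matrix.isHermitian_mul_conjTranspose_self B
    set Gp := mpinv (B * Bᴴ) with hGpdef
    have hGp : Gpᴴ = Gp := (mpinv_herm' hG).eq
    have hGGG : B * Bᴴ * Gp * (B * Bᴴ) = B * Bᴴ := mul_mpinv_mul_self hG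
    have hrg : LinearMap.range B.mulVecLin = LinearMap.range (B * Bᴴ).mulVecLin :=
      (range_mul_conjTranspose_self B).symm
    have hfixB : B * Bᴴ * Gp * B = B := fix_of_range_le hGGG (hrg ▸ le_rfl)
    have hfixA : B * Bᴴ * Gp * A = A := fix_of_range_le hGGG (hrg ▸ hrange)
    have hCH : (Bᴴ * Gp * A)ᴴ = Aᴴ * (Gp * B) := by
      simp only [Matrix.conjTranspose_mul, hGp, Matrix.conjTranspose_conjTranspose,
        Matrix.mul_assoc]
    have hQH : (Bᴴ * Gp * B)ᴴ = Bᴴ * Gp * B := by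
      simp only [Matrix.conjTranspose_mul, hGp, Matrix.conjTranspose_conjTranspose,
        Matrix.mul_assoc]
    have hCQ : (Bᴴ * Gp * A) * (Bᴴ * Gp * B) = (Bᴴ * Gp * B) * (Bᴴ * Gp * A)ᴴ := by
      rw [hCH]
      calc Bᴴ * Gp * A * (Bᴴ * Gp * B)
          = Bᴴ * Gp * (A * Bᴴ) * (Gp * B) := by simp only [Matrix.mul_assoc]
        _ = Bᴴ * Gp * (B * Aᴴ) * (Gp * B) := by rw [hAB]
        _ = Bᴴ * Gp * B * (Aᴴ * (Gp * B)) := by simp only [Matrix.mul_assoc]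
    have hBC : B * (Bᴴ * Gp * A) = A := by
      rw [← Matrix.mul_assoc, ← Matrix.mul_assoc]
      exact hfixA
    have hBQ : B * (Bᴴ * Gp * B) = B := by
      rw [← Matrix.mul_assoc, ← Matrix.mul_assoc]
      exact hfixB
    exact ⟨_, herm_aux _ _ hQH hCQ, bl_aux A B _ _ hBC hBQ⟩
end

section
/- For any two density operators $\rho, \sigma$ on a finite-dimensional Hilbert space with $\mathrm{supp}\,\rho = \mathrm{supp}\,\sigma$ of rank $r$, there exist linearly independent unit vectors $\phi_1, \dots, \phi_r$ and probability vectors $p, q$ on $\{1,\dots,r\}$ such that $\rho = \sum_{x=1}^r p(x) |\phi_x\rangle\langle\phi_x|$ and $\sigma = \sum_{x=1}^r q(x) |\phi_x\rangle\langle\phi_x|$ (and hence every mixture $t\rho + (1-t)\sigma = \sum_x (t p(x)+(1-t)q(x))|\phi_x\rangle\langle\phi_x|$). -/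
open Matrix BigOperators Filter
open scoped ComplexOrder

section Helpers

open Matrix

variable {d : ℕ} {C : Matrix (Fin d) (Fin d) ℂ}

lemma mycfc_mul (hC : C.IsHermitian) (f g : ℝ → ℝ) :
    hC.cfc f * hC.cfc g = hC.cfc (fun t => f t * g t) := by
  have key : ∀ {a b c d' e f' : Matrix (Fin d) (Fin d) ℂ},
      (a*b*c)*(d'*e*f') = a*(b*(c*d')*e)*f' := fun {a b c d' e f'} => by
    simp only [mul_assoc]
  have hU : star (hC.eigenvectorUnitary : Matrix (Fin d) (Fin d) ℂ) *
      (hC.eigenvectorUnitary : Matrix (Fin d) (Fin d) ℂ) = 1 :=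
    Unitary.star_mul_self_of_mem (SetLike.coe_mem _)
  unfold Matrix.IsHermitian.cfc
  simp only [Unitary.conjStarAlgAut_apply]
  rw [key, hU, mul_one, diagonal_mul_diagonal]
  simp [Function.comp_def]

lemma mycfc_id (hC : C.IsHermitian) : hC.cfc (fun t => t) = C := by
  conv_rhs => rw [hC.spectral_theorem]
  rfl

lemma mycfc_conjT (hC : C.IsHermitian) (f : ℝ → ℝ) : (hC.cfc f)ᴴ = hC.cfc f := by
  unfold Matrix.IsHermitian.cfc
  simp only [Unitary.conjStarAlgAut_apply]
  rw [conjTranspose_mul, conjTranspose_mul, diagonal_conjTranspose]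
  rw [← star_eq_conjTranspose, ← star_eq_conjTranspose, star_star, mul_assoc]
  simp [Function.comp_def, Pi.star_def, Complex.conj_ofReal, mul_assoc]

lemma mycfc_congr (hC : C.IsHermitian) {f g : ℝ → ℝ}
    (h : ∀ i, f (hC.eigenvalues i) = g (hC.eigenvalues i)) : hC.cfc f = hC.cfc g := by
  have hfg : (RCLike.ofReal : ℝ → ℂ) ∘ f ∘ hC.eigenvalues
      = (RCLike.ofReal : ℝ → ℂ) ∘ g ∘ hC.eigenvalues := by
    funext i; simp [h i]
  unfold Matrix.IsHermitian.cfc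
  rw [hfg]

lemma triple_sum (W : Matrix (Fin d) (Fin d) ℂ) (e : Fin d → ℝ) :
    W * Matrix.diagonal ((RCLike.ofReal : ℝ → ℂ) ∘ e) * Wᴴ
      = ∑ x, (e x : ℂ) • Matrix.vecMulVec (fun i => W i x) (star (fun i => W i x)) := by
  ext i j
  rw [Matrix.mul_apply]
  simp only [Matrix.mul_diagonal, Matrix.conjTranspose_apply, Matrix.sum_apply,
    Matrix.smul_apply, Matrix.vecMulVec_apply, Pi.star_apply, Function.comp_apply,
    smul_eq_mul, RCLike.star_def]
  refine Finset.sum_congr rfl fun k _ => ?_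
  rw [mul_right_comm]
  exact mul_comm _ _

lemma mulVec_ext {X Y : Matrix (Fin d) (Fin d) ℂ} (h : ∀ v, X *ᵥ v = Y *ᵥ v) : X = Y := by
  ext i j
  have := congrFun (h (Pi.single j 1)) i
  simpa [Matrix.mulVec_single] using this

lemma trace_vecMulVec_star (v : Fin d → ℂ) :
    Matrix.trace (Matrix.vecMulVec v (star v)) = ((∑ i, ‖v i‖ ^ 2 : ℝ) : ℂ) := by
  simp only [Matrix.trace, Matrix.diag, Matrix.vecMulVec_apply, Pi.star_apply,
    RCLike.star_def]
  push_cast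
  refine Finset.sum_congr rfl fun i _ => ?_
  rw [Complex.mul_conj']

lemma mulVec_sum' (X : Matrix (Fin d) (Fin d) ℂ) {k : ℕ} (f : Fin k → Fin d → ℂ) :
    X *ᵥ (∑ y, f y) = ∑ y, X *ᵥ f y := by
  funext i
  simp only [Matrix.mulVec, dotProduct, Finset.sum_apply, Finset.mul_sum]
  exact Finset.sum_comm

lemma dot_sum' (v : Fin d → ℂ) {k : ℕ} (f : Fin k → Fin d → ℂ) :
    v ⬝ᵥ (∑ y, f y) = ∑ y, v ⬝ᵥ f y := by
  simp only [dotProduct, Finset.sum_apply, Finset.mul_sum]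
  exact Finset.sum_comm

end Helpers

set_option maxHeartbeats 1000000 in
/-- two density operators with equal support of rank `r` can be written
as mixtures of a common family of `r` linearly independent unit vectors. -/
theorem stmt_1 {d : ℕ} (ρ σ : Matrix (Fin d) (Fin d) ℂ)
    (hρ : IsDensity ρ) (hσ : IsDensity σ)
    (hsupp : msupp ρ = msupp σ) (r : ℕ) (hr : ρ.rank = r) :
    ∃ (φ : Fin r → (Fin d → ℂ)) (p q : Fin r → ℝ),
      LinearIndependent ℂ φ ∧ (∀ x, ∑ i, ‖φ x i‖ ^ 2 = 1) ∧
      IsProb p ∧ IsProb q ∧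
      ρ = ∑ x, (p x : ℂ) • outer (φ x) ∧
      σ = ∑ x, (q x : ℂ) • outer (φ x) ∧
      (∀ t : ℝ, (t : ℂ) • ρ + ((1 - t : ℝ) : ℂ) • σ =
        ∑ x, ((t * p x + (1 - t) * q x : ℝ) : ℂ) • outer (φ x)) := by
  obtain ⟨hρP, hρtr⟩ := hρ
  obtain ⟨hσP, hσtr⟩ := hσ
  have hσH : σ.IsHermitian := hσP.1
  have hρH : ρ.IsHermitian := hρP.1
  have hevnn : ∀ i, 0 ≤ hσH.eigenvalues i := hσP.eigenvalues_nonneg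
  set fs : ℝ → ℝ := fun t => Real.sqrt t with hfs
  set gs : ℝ → ℝ := fun t => (Real.sqrt t)⁻¹ with hgs
  set hh : ℝ → ℝ := fun t => if t = 0 then 0 else 1 with hhh
  set ks : ℝ → ℝ := fun t => (t * Real.sqrt t)⁻¹ with hks
  set A := hσH.cfc fs with hA
  set B := hσH.cfc gs with hB
  set P := hσH.cfc hh with hP
  set K := hσH.cfc ks with hK
  have hsqrt_ne : ∀ t : ℝ, 0 ≤ t → t ≠ 0 → Real.sqrt t ≠ 0 := fun t ht hne =>
    ne_of_gt (Real.sqrt_pos.mpr (lt_of_le_of_ne ht (Ne.symm hne)))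
  have hAB : A * B = P := by
    rw [hA, hB, hP, mycfc_mul]
    refine mycfc_congr _ fun i => ?_
    by_cases h : hσH.eigenvalues i = 0
    · simp [hfs, hgs, hhh, h]
    · simp only [hfs, hgs, hhh, if_neg h]
      exact mul_inv_cancel₀ (hsqrt_ne _ (hevnn i) h)
  have hBA : B * A = P := by
    rw [hA, hB, hP, mycfc_mul]
    refine mycfc_congr _ fun i => ?_
    by_cases h : hσH.eigenvalues i = 0
    · simp [hfs, hgs, hhh, h]
    · simp only [hfs, hgs, hhh, if_neg h]
      exact inv_mul_cancel₀ (hsqrt_ne _ (hevnn i) h)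
  have hAA : A * A = σ := by
    rw [hA, mycfc_mul, show (fun t => fs t * fs t) = fun t => Real.sqrt t * Real.sqrt t from rfl]
    rw [show hσH.cfc (fun t => Real.sqrt t * Real.sqrt t) = hσH.cfc (fun t => t) from
      mycfc_congr _ fun i => Real.mul_self_sqrt (hevnn i)]
    exact mycfc_id hσH
  have hPσ : P * σ = σ := by
    conv_lhs => rw [← mycfc_id hσH]
    rw [hP, mycfc_mul]
    conv_rhs => rw [← mycfc_id hσH]
    refine mycfc_congr _ fun i => ?_
    by_cases h : hσH.eigenvalues i = 0 <;> simp [hhh, h]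
  have hσK : σ * K = B := by
    conv_lhs => rw [← mycfc_id hσH]
    rw [hK, hB, mycfc_mul]
    refine mycfc_congr _ fun i => ?_
    by_cases h : hσH.eigenvalues i = 0
    · simp [hks, hgs, h]
    · simp only [hks, hgs]
      rw [mul_inv, ← mul_assoc, mul_inv_cancel₀ h, one_mul]
  have hBP : B * P = B := by
    rw [hB, hP, mycfc_mul]
    refine mycfc_congr _ fun i => ?_
    by_cases h : hσH.eigenvalues i = 0 <;> simp [hgs, hhh, h]
  have hPB : P * B = B := by
    rw [hB, hP, mycfc_mul]
    refine mycfc_congr _ fun i => ?_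
    by_cases h : hσH.eigenvalues i = 0 <;> simp [hgs, hhh, h]
  have hAP : A * P = A := by
    rw [hA, hP, mycfc_mul]
    refine mycfc_congr _ fun i => ?_
    by_cases h : hσH.eigenvalues i = 0 <;> simp [hfs, hhh, h]
  have hAHerm : Aᴴ = A := mycfc_conjT hσH fs
  have hBHerm : Bᴴ = B := mycfc_conjT hσH gs
  have hPHerm : Pᴴ = P := mycfc_conjT hσH hh
  -- support projections
  have hrange : LinearMap.range ρ.mulVecLin = LinearMap.range σ.mulVecLin := hsupp
  have hPρ : P * ρ = ρ := by
    apply mulVec_ext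
    intro v
    have hmem : ρ *ᵥ v ∈ LinearMap.range σ.mulVecLin := by
      rw [← hrange]; exact ⟨v, by simp [Matrix.mulVecLin_apply]⟩
    obtain ⟨y, hy⟩ := hmem
    rw [Matrix.mulVecLin_apply] at hy
    rw [← Matrix.mulVec_mulVec, ← hy, Matrix.mulVec_mulVec, hPσ]
  have hρPr : ρ * P = ρ := by
    have := congrArg Matrix.conjTranspose hPρ
    rwa [Matrix.conjTranspose_mul, hPHerm, hρH.eq] at this
  -- the conjugated operator M
  set M := B * ρ * B with hMdef
  have hMpsd : M.PosSemidef := by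
    have := hρP.mul_mul_conjTranspose_same B
    rwa [hBHerm] at this
  have hMH : M.IsHermitian := hMpsd.1
  have hAMA : A * M * A = ρ := by
    rw [hMdef]
    calc A * (B * ρ * B) * A = (A * B) * ρ * (B * A) := by simp only [mul_assoc]
    _ = ρ := by rw [hAB, hBA, hPρ, hρPr]
  have hrank : M.rank = r := by
    apply le_antisymm
    · calc M.rank = (B * (ρ * B)).rank := by rw [hMdef, mul_assoc]
      _ ≤ (ρ * B).rank := Matrix.rank_mul_le_right _ _
      _ ≤ ρ.rank := Matrix.rank_mul_le_left _ _
      _ = r := hr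
    · calc r = ρ.rank := hr.symm
      _ = ((A * M) * A).rank := by rw [← hAMA]
      _ ≤ (A * M).rank := Matrix.rank_mul_le_left _ _
      _ ≤ M.rank := Matrix.rank_mul_le_right _ _
  -- eigen data of M
  set μ := hMH.eigenvalues with hμ
  have hμnn : ∀ i, 0 ≤ μ i := hMpsd.eigenvalues_nonneg
  set V := (hMH.eigenvectorUnitary : Matrix (Fin d) (Fin d) ℂ) with hV
  have hVV : star V * V = 1 := Unitary.star_mul_self_of_mem (SetLike.coe_mem _)
  have hVV' : V * star V = 1 := Unitary.mul_star_self_of_mem (SetLike.coe_mem _)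
  set u : Fin d → (Fin d → ℂ) := fun x i => V i x with hu
  set w : Fin d → (Fin d → ℂ) := fun x => A *ᵥ u x with hw
  have hspec : M * V = V * Matrix.diagonal ((RCLike.ofReal : ℝ → ℂ) ∘ μ) := by
    conv_lhs => rw [hMH.spectral_theorem]
    simp only [Unitary.conjStarAlgAut_apply, mul_assoc]
    rw [hVV, mul_one]
  have hMu : ∀ x, M *ᵥ u x = (μ x : ℂ) • u x := by
    intro x
    funext i
    have h1 : (M * V) i x = (V * Matrix.diagonal ((RCLike.ofReal : ℝ → ℂ) ∘ μ)) i x := by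
      rw [hspec]
    rw [Matrix.mul_apply, Matrix.mul_diagonal] at h1
    simp only [Matrix.mulVec, dotProduct, hu, Pi.smul_apply, smul_eq_mul]
    rw [h1, Function.comp_apply, mul_comm]
    rfl
  have huO : ∀ x y, star (u x) ⬝ᵥ u y = if x = y then 1 else 0 := by
    intro x y
    have h1 := congrFun (congrFun hVV x) y
    rw [Matrix.mul_apply] at h1
    simp only [Matrix.one_apply] at h1
    rw [← h1]
    simp [dotProduct, hu, Matrix.conjTranspose_apply]
  have hu0 : ∀ x, u x ≠ 0 := by
    intro x hx
    have := huO x x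
    rw [hx] at this
    simp at this
  -- zero eigenvalues give zero vectors
  have hw0 : ∀ x, μ x = 0 → w x = 0 := by
    intro x hx
    have hMux : M *ᵥ u x = 0 := by rw [hMu x, hx]; simp
    have h2 : star (B *ᵥ u x) ⬝ᵥ ρ *ᵥ (B *ᵥ u x) = 0 := by
      rw [Matrix.star_mulVec, hBHerm, Matrix.mulVec_mulVec, Matrix.dotProduct_mulVec,
        Matrix.vecMul_vecMul]
      have : star (u x) ᵥ* (B * (ρ * B)) ⬝ᵥ u x = star (u x) ⬝ᵥ (B * (ρ * B)) *ᵥ u x :=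
        (Matrix.dotProduct_mulVec _ _ _).symm
      rw [this, ← mul_assoc, ← hMdef, hMux]
      simp
    have h3 : ρ *ᵥ (B *ᵥ u x) = 0 := (hρP.dotProduct_mulVec_zero_iff _).mp h2
    have h4 : B *ᵥ u x ∈ LinearMap.range ρ.mulVecLin := by
      rw [hrange]
      exact ⟨K *ᵥ u x, by rw [Matrix.mulVecLin_apply, Matrix.mulVec_mulVec, hσK]⟩
    obtain ⟨y, hy⟩ := h4
    rw [Matrix.mulVecLin_apply] at hy
    have h5 : star (B *ᵥ u x) ⬝ᵥ (B *ᵥ u x) = 0 := by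
      conv_lhs => rw [← hy]
      rw [Matrix.star_mulVec, hρH.eq, ← Matrix.dotProduct_mulVec, hy, h3,
        dotProduct_zero]
    have h6 : B *ᵥ u x = 0 := dotProduct_star_self_eq_zero.mp h5
    show A *ᵥ u x = 0
    calc A *ᵥ u x = (A * P) *ᵥ u x := by rw [hAP]
    _ = (A * (A * B)) *ᵥ u x := by rw [hAB]
    _ = A *ᵥ (A *ᵥ (B *ᵥ u x)) := by rw [Matrix.mulVec_mulVec, Matrix.mulVec_mulVec, mul_assoc]
    _ = 0 := by rw [h6, Matrix.mulVec_zero, Matrix.mulVec_zero]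
  -- nonzero eigenvalues give nonzero vectors
  have hwne : ∀ x, μ x ≠ 0 → w x ≠ 0 := by
    intro x hx hwx
    have hPu : P *ᵥ u x = 0 := by
      rw [← hBA, ← Matrix.mulVec_mulVec]
      show B *ᵥ w x = 0
      rw [hwx, Matrix.mulVec_zero]
    have hBu : B *ᵥ u x = 0 := by
      rw [← hBP, ← Matrix.mulVec_mulVec, hPu, Matrix.mulVec_zero]
    have hMux : M *ᵥ u x = 0 := by
      rw [hMdef, mul_assoc, ← Matrix.mulVec_mulVec, ← Matrix.mulVec_mulVec, hBu]
      simp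
    rw [hMu x] at hMux
    have := (smul_eq_zero.mp hMux).resolve_left (by exact_mod_cast hx)
    exact hu0 x this
  -- B maps w back to u on nonzero eigenvalues
  have hBw : ∀ x, μ x ≠ 0 → B *ᵥ w x = u x := by
    intro x hx
    have hPM : P * M = M := by
      rw [hMdef, ← mul_assoc, ← mul_assoc, hPB]
    have h1 : P *ᵥ (M *ᵥ u x) = M *ᵥ u x := by
      rw [Matrix.mulVec_mulVec, hPM]
    rw [hMu x, Matrix.mulVec_smul] at h1
    have hPu : P *ᵥ u x = u x := by
      have hμx : (μ x : ℂ) ≠ 0 := by exact_mod_cast hx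
      exact smul_right_injective _ hμx h1
    rw [hw, Matrix.mulVec_mulVec, hBA, hPu]
  -- sum representations over all of Fin d
  have hWcol : ∀ x, (fun i => (A * V) i x) = w x := by
    intro x
    funext i
    rw [Matrix.mul_apply]
    rfl
  have hρsum : ρ = ∑ x, (μ x : ℂ) • Matrix.vecMulVec (w x) (star (w x)) := by
    have h1 : ρ = (A * V) * Matrix.diagonal ((RCLike.ofReal : ℝ → ℂ) ∘ μ) * (A * V)ᴴ := by
      rw [Matrix.conjTranspose_mul, hAHerm]
      conv_lhs => rw [← hAMA]
      conv_lhs => rw [hMH.spectral_theorem, Unitary.conjStarAlgAut_apply]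
      rw [Matrix.star_eq_conjTranspose]
      simp only [mul_assoc]
      rfl
    rw [h1, triple_sum]
    exact Finset.sum_congr rfl fun x _ => by rw [hWcol x]
  have hσsum : σ = ∑ x, Matrix.vecMulVec (w x) (star (w x)) := by
    have h1 : σ = (A * V) * Matrix.diagonal ((RCLike.ofReal : ℝ → ℂ) ∘ fun _ => (1 : ℝ))
        * (A * V)ᴴ := by
      have hd : Matrix.diagonal ((RCLike.ofReal : ℝ → ℂ) ∘ fun _ : Fin d => (1 : ℝ)) = 1 := by
        rw [show (RCLike.ofReal : ℝ → ℂ) ∘ (fun _ : Fin d => (1 : ℝ)) = fun _ => (1 : ℂ) by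
          funext i; simp]
        exact Matrix.diagonal_one
      rw [hd, mul_one, Matrix.conjTranspose_mul, hAHerm]
      conv_lhs => rw [← hAA]
      rw [show A * V * (Vᴴ * A) = A * (V * Vᴴ) * A by simp only [mul_assoc]]
      rw [← Matrix.star_eq_conjTranspose, hVV', mul_one]
    rw [h1, triple_sum]
    refine Finset.sum_congr rfl fun x _ => by rw [hWcol x]; simp
  -- transport sums to Fin r
  have hcard : Fintype.card {x // μ x ≠ 0} = r := by
    rw [← hMH.rank_eq_card_non_zero_eigs]
    exact hrank
  set e : Fin r ≃ {x // μ x ≠ 0} := (Fintype.equivFinOfCardEq hcard).symm with he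
  have hsum_trans : ∀ {γ : Type} [AddCommMonoid γ] (F : Fin d → γ),
      (∀ x, μ x = 0 → F x = 0) → ∑ x, F x = ∑ y : Fin r, F (e y) := by
    intro γ _ F hF
    classical
    have h1 : ∑ x ∈ Finset.univ.filter (fun x => μ x ≠ 0), F x = ∑ x, F x :=
      Finset.sum_filter_of_ne (fun x _ hne => by
        by_contra h0
        exact hne (hF x h0))
    rw [← h1, Finset.sum_subtype (p := fun x => μ x ≠ 0) _
      (fun x => by simp [Finset.mem_filter]) F]
    exact (Equiv.sum_comp e fun z => F z.val).symm
  -- norms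
  set n2 : Fin d → ℝ := fun x => ∑ i, ‖w x i‖ ^ 2 with hn2
  have hn2nn : ∀ x, 0 ≤ n2 x := fun x => Finset.sum_nonneg fun i _ => by positivity
  have hn2pos : ∀ x, μ x ≠ 0 → 0 < n2 x := by
    intro x hx
    have hwx := hwne x hx
    have hex : ∃ i, w x i ≠ 0 := by
      by_contra h
      push_neg at h
      exact hwx (funext h)
    obtain ⟨i, hi⟩ := hex
    exact Finset.sum_pos' (fun j _ => by positivity)
      ⟨i, Finset.mem_univ i, pow_pos (norm_pos_iff.mpr hi) 2⟩
  have hn2zero : ∀ x, μ x = 0 → n2 x = 0 := by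
    intro x hx
    rw [hn2]
    simp [hw0 x hx]
  set φ : Fin r → (Fin d → ℂ) := fun y => ((Real.sqrt (n2 (e y)) : ℂ))⁻¹ • w (e y) with hφ
  set p : Fin r → ℝ := fun y => μ (e y) * n2 (e y) with hp
  set q : Fin r → ℝ := fun y => n2 (e y) with hq
  -- unit vectors
  have hφunit : ∀ y, ∑ i, ‖φ y i‖ ^ 2 = 1 := by
    intro y
    rw [hφ]
    simp only [Pi.smul_apply, smul_eq_mul, norm_mul, mul_pow, norm_inv]
    rw [← Finset.mul_sum]
    have h2 : ‖((Real.sqrt (n2 (e y)) : ℝ) : ℂ)‖ = Real.sqrt (n2 (e y)) := by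
      rw [Complex.norm_real]
      exact abs_of_nonneg (Real.sqrt_nonneg _)
    rw [h2, inv_pow, Real.sq_sqrt (hn2nn _)]
    exact inv_mul_cancel₀ (ne_of_gt (hn2pos _ (e y).2))
  -- linear independence
  have hsqne : ∀ y : Fin r, (((Real.sqrt (n2 (e y)) : ℝ) : ℂ)) ≠ 0 := fun y => by
    exact_mod_cast hsqrt_ne _ (hn2nn _) (ne_of_gt (hn2pos _ (e y).2))
  have hlin : LinearIndependent ℂ φ := by
    rw [Fintype.linearIndependent_iff]
    intro c hc y0
    have hBv : ∑ y, (c y * (((Real.sqrt (n2 (e y)) : ℝ) : ℂ))⁻¹) • u (e y) = 0 := by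
      have h0 : B *ᵥ (∑ y, c y • φ y) = 0 := by rw [hc, Matrix.mulVec_zero]
      rw [mulVec_sum'] at h0
      rw [← h0]
      refine Finset.sum_congr rfl fun y _ => ?_
      rw [hφ]
      rw [Matrix.mulVec_smul, Matrix.mulVec_smul, hBw _ (e y).2, mul_smul]
    have hdot := congrArg (fun v => star (u (e y0)) ⬝ᵥ v) hBv
    simp only [dot_sum', dotProduct_smul, smul_eq_mul, dotProduct_zero] at hdot
    rw [Finset.sum_eq_single y0 (fun y _ hy => ?_) (fun h => absurd (Finset.mem_univ y0) h)]
      at hdot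
    · rw [huO, if_pos rfl, mul_one] at hdot
      exact (mul_eq_zero.mp hdot).resolve_right (inv_ne_zero (hsqne y0))
    · rw [huO, if_neg (fun h => hy (e.injective (Subtype.ext h.symm))), mul_zero]
  -- probability vectors
  have htrρ : ∑ x, μ x * n2 x = 1 := by
    have h1 := congrArg Matrix.trace hρsum
    rw [hρtr, Matrix.trace_sum] at h1
    simp only [Matrix.trace_smul, trace_vecMulVec_star, smul_eq_mul] at h1
    have h2 : ((∑ x, μ x * n2 x : ℝ) : ℂ) = 1 := by
      push_cast
      exact h1.symm
    exact_mod_cast h2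
  have htrσ : ∑ x, n2 x = 1 := by
    have h1 := congrArg Matrix.trace hσsum
    rw [hσtr, Matrix.trace_sum] at h1
    simp only [trace_vecMulVec_star] at h1
    have h2 : ((∑ x, n2 x : ℝ) : ℂ) = 1 := by
      push_cast
      exact h1.symm
    exact_mod_cast h2
  have hpsum : ∑ y, p y = 1 := by
    have ht := hsum_trans (fun x => μ x * n2 x) (fun x hx => by show μ x * n2 x = 0; rw [hx, zero_mul])
    simp only [hp]
    rw [← ht]
    exact htrρ
  have hqsum : ∑ y, q y = 1 := by
    have ht := hsum_trans (fun x => n2 x) (fun x hx => hn2zero x hx)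
    simp only [hq]
    rw [← ht]
    exact htrσ
  have hprob_p : IsProb p := ⟨fun y => mul_nonneg (hμnn _) (hn2nn _), hpsum⟩
  have hprob_q : IsProb q := ⟨fun y => hn2nn _, hqsum⟩
  -- scalar identity for outer products
  have hss : ∀ y : Fin r, ((Real.sqrt (n2 (e y)) : ℝ) : ℂ) * ((Real.sqrt (n2 (e y)) : ℝ) : ℂ)
      = ((n2 (e y) : ℝ) : ℂ) := fun y => by
    rw [← Complex.ofReal_mul, Real.mul_self_sqrt (hn2nn _)]
  have houterp : ∀ y : Fin r, (p y : ℂ) • outer (φ y)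
      = (μ (e y) : ℂ) • Matrix.vecMulVec (w (e y)) (star (w (e y))) := by
    intro y
    ext i j
    simp only [hp, hφ, outer, Matrix.smul_apply, Matrix.vecMulVec_apply, Pi.smul_apply,
      Pi.star_apply, smul_eq_mul, star_mul', star_inv₀, Complex.star_def, Complex.conj_ofReal]
    have h4 := hss y
    have h5 := hsqne y
    push_cast
    field_simp
    rw [← h4]
    ring
  have houterq : ∀ y : Fin r, (q y : ℂ) • outer (φ y)
      = Matrix.vecMulVec (w (e y)) (star (w (e y))) := by
    intro y
    ext i j
    simp only [hq, hφ, outer, Matrix.smul_apply, Matrix.vecMulVec_apply, Pi.smul_apply,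
      Pi.star_apply, smul_eq_mul, star_mul', star_inv₀, Complex.star_def, Complex.conj_ofReal]
    have h4 := hss y
    have h5 := hsqne y
    field_simp
    rw [← h4]
    ring
  have hρfin : ρ = ∑ y, (p y : ℂ) • outer (φ y) := by
    rw [hρsum, hsum_trans _ (fun x hx => by rw [hx]; simp)]
    exact Finset.sum_congr rfl fun y _ => (houterp y).symm
  have hσfin : σ = ∑ y, (q y : ℂ) • outer (φ y) := by
    rw [hσsum, hsum_trans _ (fun x hx => by show Matrix.vecMulVec (w x) (star (w x)) = 0; rw [hw0 x hx]; ext i j; simp [Matrix.vecMulVec_apply])]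
    exact Finset.sum_congr rfl fun y _ => (houterq y).symm
  exact ⟨φ, p, q, hlin, hφunit, hprob_p, hprob_q, hρfin, hσfin, fun t => by
    rw [hρfin, hσfin, Finset.smul_sum, Finset.smul_sum, ← Finset.sum_add_distrib]
    refine Finset.sum_congr rfl fun y _ => ?_
    rw [smul_smul, smul_smul, ← add_smul]
    congr 1
    push_cast
    ring⟩
end

section
/- For classical probability distributions $p, q$ on a finite set with $\mathrm{supp}\,p \subseteq \mathrm{supp}\,q$, letting $p_t := t p + (1-t)q$ for $t \in [0,1]$ and $J_{p_t} := \sum_x \frac{(p(x)-q(x))^2}{p_t(x)}$ the Fisher information of this one-parameter family, one has $\mathrm{D}(p\|q) = \int_0^1 \int_0^t J_{p_s}\, ds\, dt$. -/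
open Matrix BigOperators Filter
open scoped ComplexOrder

open MeasureTheory intervalIntegral Set in
private lemma aux_affine_deriv (a b s : ℝ) :
    HasDerivAt (fun u : ℝ => u * a + (1 - u) * b) (a - b) s := by
  have h := ((hasDerivAt_id s).mul_const a).add
    (((hasDerivAt_const s (1:ℝ)).sub (hasDerivAt_id s)).mul_const b)
  refine h.congr_deriv ?_
  ring

private lemma aux_pos {a b : ℝ} (ha : 0 ≤ a) (hb : 0 < b) {s : ℝ} (hs0 : 0 ≤ s) (hs1 : s < 1) :
    0 < s * a + (1 - s) * b := by nlinarith

open MeasureTheory intervalIntegral Set in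
private lemma aux_log_int {a b : ℝ} (ha : 0 ≤ a) (hb : 0 < b) :
    IntervalIntegrable (fun t : ℝ => Real.log (t * a + (1 - t) * b)) volume 0 1 := by
  rcases ha.lt_or_eq with hap | hap
  · have hpos : ∀ t ∈ uIcc (0:ℝ) 1, 0 < t * a + (1 - t) * b := by
      intro t ht
      rw [uIcc_of_le (by norm_num)] at ht
      nlinarith [lt_min hap hb, mul_le_mul_of_nonneg_left (min_le_left a b) ht.1,
        mul_le_mul_of_nonneg_left (min_le_right a b) (sub_nonneg.2 ht.2)]
    apply ContinuousOn.intervalIntegrable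
    exact (Continuous.continuousOn (by continuity)).log (fun t ht => (hpos t ht).ne')
  · have hap' : a = 0 := hap.symm
    subst hap'
    have key : IntegrableOn (fun t : ℝ => Real.log b - Real.log ((1 - t) * b)) (Ioc 0 1)
        volume := by
      have hcont : ContinuousOn
          (fun t : ℝ => (1 - t) * Real.log ((1 - t) * b) + t + t * Real.log b) (Icc 0 1) := by
        have h1 : Continuous fun t : ℝ => ((1 - t) * b) * Real.log ((1 - t) * b) :=
          Real.continuous_mul_log.comp (by continuity)
        apply Continuous.continuousOn
        rw [show (fun t : ℝ => (1 - t) * Real.log ((1 - t) * b) + t + t * Real.log b) =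
            fun t : ℝ => ((((1 - t) * b) * Real.log ((1 - t) * b)) * b⁻¹ + t + t * Real.log b)
            by funext t; field_simp]
        exact ((h1.mul continuous_const).add continuous_id).add (by continuity)
      have hderiv : ∀ t ∈ Ioo (0:ℝ) 1,
          HasDerivAt (fun t : ℝ => (1 - t) * Real.log ((1 - t) * b) + t + t * Real.log b)
            (Real.log b - Real.log ((1 - t) * b)) t := by
        intro t ht
        have h1t : (0:ℝ) < 1 - t := by linarith [ht.2]
        have hne : (1 - t) * b ≠ 0 := by positivity
        have hu : HasDerivAt (fun u : ℝ => (1 - u) * b) (-b) t := by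
          have := ((hasDerivAt_const t (1:ℝ)).sub (hasDerivAt_id t)).mul_const b
          refine this.congr_deriv ?_; ring
        have hmul : HasDerivAt (fun u : ℝ => (1 - u) * Real.log ((1 - u) * b))
            ((-1) * Real.log ((1 - t) * b) + (1 - t) * (-b / ((1 - t) * b))) t := by
          have h0 : HasDerivAt (fun u : ℝ => (1 - u)) (-1 : ℝ) t := by
            have := (hasDerivAt_const t (1:ℝ)).sub (hasDerivAt_id t)
            refine this.congr_deriv ?_; ring
          exact h0.mul (hu.log hne)
        have hfin := (hmul.add (hasDerivAt_id t)).add ((hasDerivAt_id t).mul_const (Real.log b))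
        refine hfin.congr_deriv ?_
        field_simp
        ring
      have hnonneg : ∀ t ∈ Ioo (0:ℝ) 1, 0 ≤ Real.log b - Real.log ((1 - t) * b) := by
        intro t ht
        have h1t : (0:ℝ) < 1 - t := by linarith [ht.2]
        have hle : (1 - t) * b ≤ b := by nlinarith [ht.1]
        have := Real.log_le_log (by positivity) hle
        linarith
      exact integrableOn_deriv_of_nonneg hcont hderiv hnonneg
    have hI : IntervalIntegrable (fun t : ℝ => Real.log b - Real.log ((1 - t) * b))
        volume 0 1 := by
      rw [intervalIntegrable_iff_integrableOn_Ioc_of_le (by norm_num)]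
      exact key
    have heq : (fun t : ℝ => Real.log (t * 0 + (1 - t) * b)) =
        fun t : ℝ => Real.log b - (Real.log b - Real.log ((1 - t) * b)) := by
      funext t
      rw [show t * 0 + (1 - t) * b = (1 - t) * b by ring]
      ring
    rw [heq]
    exact (_root_.intervalIntegrable_const).sub hI

open MeasureTheory intervalIntegral Set in
private lemma aux_inner {a b : ℝ} (ha : 0 ≤ a) (hb : 0 < b) {t : ℝ} (ht0 : 0 ≤ t) (ht1 : t < 1) :
    (∫ s in (0:ℝ)..t, if 0 < s * a + (1 - s) * b then (a - b) ^ 2 / (s * a + (1 - s) * b) else 0)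
      = (a - b) * (Real.log (t * a + (1 - t) * b) - Real.log b) := by
  have hpos : ∀ s ∈ uIcc (0:ℝ) t, 0 < s * a + (1 - s) * b := by
    intro s hs
    rw [uIcc_of_le ht0] at hs
    exact aux_pos ha hb hs.1 (lt_of_le_of_lt hs.2 ht1)
  rw [intervalIntegral.integral_congr (g := fun s => (a - b) ^ 2 / (s * a + (1 - s) * b))
    (fun s hs => if_pos (hpos s hs))]
  have hderiv : ∀ s ∈ uIcc (0:ℝ) t,
      HasDerivAt (fun u => (a - b) * Real.log (u * a + (1 - u) * b))
        ((a - b) ^ 2 / (s * a + (1 - s) * b)) s := by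
    intro s hs
    have h := ((aux_affine_deriv a b s).log (hpos s hs).ne').const_mul (a - b)
    refine h.congr_deriv ?_
    rw [sq]
    ring
  have hint : IntervalIntegrable (fun s : ℝ => (a - b) ^ 2 / (s * a + (1 - s) * b))
      volume 0 t :=
    (continuousOn_const.div (Continuous.continuousOn (by continuity))
      fun s hs => (hpos s hs).ne').intervalIntegrable
  rw [intervalIntegral.integral_eq_sub_of_hasDerivAt hderiv hint]
  norm_num
  ring

open MeasureTheory intervalIntegral Set in
private lemma aux_outer {a b : ℝ} (ha : 0 ≤ a) (hb : 0 < b) :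
    (∫ t in (0:ℝ)..1, (a - b) * (Real.log (t * a + (1 - t) * b) - Real.log b))
      = a * Real.log a - a - (b * Real.log b - b) - (a - b) * Real.log b := by
  have hint : IntervalIntegrable (fun t : ℝ => (a - b) * Real.log (t * a + (1 - t) * b))
      volume 0 1 := (aux_log_int ha hb).const_mul (a - b)
  have heq : (fun t : ℝ => (a - b) * (Real.log (t * a + (1 - t) * b) - Real.log b)) =
      fun t => (a - b) * Real.log (t * a + (1 - t) * b) - (a - b) * Real.log b := by
    funext t; ring
  rw [heq, intervalIntegral.integral_sub hint intervalIntegrable_const,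
    intervalIntegral.integral_const]
  have hmain : (∫ t in (0:ℝ)..1, (a - b) * Real.log (t * a + (1 - t) * b))
      = a * Real.log a - a - (b * Real.log b - b) := by
    have hG : ∀ t ∈ Ioo (0:ℝ) 1, HasDerivAt
        (fun u : ℝ => (u * a + (1 - u) * b) * Real.log (u * a + (1 - u) * b)
          - (u * a + (1 - u) * b))
        ((a - b) * Real.log (t * a + (1 - t) * b)) t := by
      intro t ht
      have hf := aux_affine_deriv a b t
      have hpos := aux_pos ha hb ht.1.le ht.2
      have hne := hpos.ne'
      have h := (hf.mul (hf.log hne)).sub hf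
      refine h.congr_deriv ?_
      rw [mul_comm (t * a + (1 - t) * b), div_mul_cancel₀ _ hne]
      ring
    have hcont : ContinuousOn
        (fun u : ℝ => (u * a + (1 - u) * b) * Real.log (u * a + (1 - u) * b)
          - (u * a + (1 - u) * b)) (Icc 0 1) :=
      Continuous.continuousOn ((Real.continuous_mul_log.comp (by continuity)).sub (by continuity))
    rw [intervalIntegral.integral_eq_sub_of_hasDerivAt_of_le (by norm_num) hcont hG hint]
    norm_num
  rw [hmain]
  simp

/-- the classical relative entropy is the double integral of the Fisher
information along the mixture family `p_t = t p + (1-t) q`. -/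
theorem stmt_9 {m : ℕ} (p q : Fin m → ℝ) (hp : IsProb p) (hq : IsProb q)
    (hsupp : ∀ x, q x = 0 → p x = 0) :
    classRelEnt p q =
      ∫ t in (0:ℝ)..1, ∫ s in (0:ℝ)..t,
        (∑ x, if 0 < s * p x + (1 - s) * q x then
          (p x - q x) ^ 2 / (s * p x + (1 - s) * q x) else 0) := by
  obtain ⟨hp0, hp1⟩ := hp
  obtain ⟨hq0, hq1⟩ := hq
  have hInner : ∀ t ∈ Set.Ioo (0:ℝ) 1,
      (∫ s in (0:ℝ)..t, ∑ x, if 0 < s * p x + (1 - s) * q x then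
          (p x - q x) ^ 2 / (s * p x + (1 - s) * q x) else 0)
        = ∑ x, (p x - q x) * (Real.log (t * p x + (1 - t) * q x) - Real.log (q x)) := by
    intro t ht
    rw [intervalIntegral.integral_finset_sum]
    · refine Finset.sum_congr rfl fun x _ => ?_
      rcases (hq0 x).lt_or_eq with hqx | hqx
      · exact aux_inner (hp0 x) hqx ht.1.le ht.2
      · have hq' : q x = 0 := hqx.symm
        have hpx := hsupp x hq'
        simp [hq', hpx]
    · intro x _
      rcases (hq0 x).lt_or_eq with hqx | hqx
      · apply ContinuousOn.intervalIntegrable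
        have hpos : ∀ s ∈ Set.uIcc (0:ℝ) t, 0 < s * p x + (1 - s) * q x := by
          intro s hs
          rw [Set.uIcc_of_le ht.1.le] at hs
          exact aux_pos (hp0 x) hqx hs.1 (lt_of_le_of_lt hs.2 ht.2)
        have hcont : ContinuousOn (fun s : ℝ => (p x - q x) ^ 2 / (s * p x + (1 - s) * q x))
            (Set.uIcc 0 t) :=
          continuousOn_const.div (Continuous.continuousOn (by continuity))
            fun s hs => (hpos s hs).ne'
        exact hcont.congr fun s hs => if_pos (hpos s hs)
      · have hq' : q x = 0 := hqx.symm
        have hpx := hsupp x hq'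
        simp [hq', hpx]
  have hOuterEq : (∫ t in (0:ℝ)..1, ∫ s in (0:ℝ)..t, ∑ x, if 0 < s * p x + (1 - s) * q x then
          (p x - q x) ^ 2 / (s * p x + (1 - s) * q x) else 0)
      = ∫ t in (0:ℝ)..1, ∑ x,
          (p x - q x) * (Real.log (t * p x + (1 - t) * q x) - Real.log (q x)) := by
    apply intervalIntegral.integral_congr_ae'
    · have h1 : ∀ᵐ x : ℝ ∂MeasureTheory.volume, x ≠ 1 := by
        refine MeasureTheory.ae_iff.mpr ?_
        have : {x : ℝ | ¬ x ≠ 1} = {1} := by ext y; simp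
        rw [this]
        exact MeasureTheory.measure_singleton 1
      filter_upwards [h1] with t ht htmem
      exact hInner t ⟨htmem.1, lt_of_le_of_ne htmem.2 ht⟩
    · have : Set.Ioc (1:ℝ) 0 = ∅ := Set.Ioc_eq_empty (by norm_num)
      simp [this]
  rw [hOuterEq]
  have hIntEach : ∀ x ∈ Finset.univ (α := Fin m), IntervalIntegrable
      (fun t : ℝ => (p x - q x) * (Real.log (t * p x + (1 - t) * q x) - Real.log (q x)))
      MeasureTheory.volume 0 1 := by
    intro x _
    rcases (hq0 x).lt_or_eq with hqx | hqx
    · have heq : (fun t : ℝ => (p x - q x) * (Real.log (t * p x + (1 - t) * q x)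
          - Real.log (q x)))
          = fun t => (p x - q x) * Real.log (t * p x + (1 - t) * q x)
            - (p x - q x) * Real.log (q x) := by
        funext t; ring
      rw [heq]
      exact ((aux_log_int (hp0 x) hqx).const_mul _).sub intervalIntegrable_const
    · have hq' : q x = 0 := hqx.symm
      have hpx := hsupp x hq'
      simp [hq', hpx]
  rw [intervalIntegral.integral_finset_sum hIntEach]
  have hval : ∀ x, (∫ t in (0:ℝ)..1,
      (p x - q x) * (Real.log (t * p x + (1 - t) * q x) - Real.log (q x)))
      = p x * Real.log (p x / q x) - (p x - q x) := by
    intro x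
    rcases (hq0 x).lt_or_eq with hqx | hqx
    · rw [aux_outer (hp0 x) hqx]
      rcases (hp0 x).lt_or_eq with hpx | hpx
      · rw [Real.log_div hpx.ne' hqx.ne']
        ring
      · have hp' : p x = 0 := hpx.symm
        simp [hp']
    · have hq' : q x = 0 := hqx.symm
      have hpx := hsupp x hq'
      simp [hq', hpx]
  simp only [hval]
  rw [Finset.sum_sub_distrib, Finset.sum_sub_distrib, hp1, hq1]
  simp [classRelEnt]
end

section
/- Let $\{\rho_t\}_{t\in[0,1]}$ with $\rho_t = \sum_{x=1}^r p_t(x)|\phi_x\rangle\langle\phi_x|$ be an RLD-parallel family, where $\{\phi_x\}$ are linearly independent unit vectors and $p_t$ smooth probability distributions with $p_t(x) > 0$. Then the RLD Fisher information of the quantum family equals the classical Fisher information of $\{p_t\}$: $J^R_{\rho_t} = J_{p_t} = \sum_x \frac{(\dot p_t(x))^2}{p_t(x)}$. -/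
open Matrix BigOperators Filter
open scoped ComplexOrder

namespace Aux
variable {n : Type} [Fintype n] [DecidableEq n] {A : Matrix n n ℂ}

lemma cfc_mul (hA : A.IsHermitian) (f g : ℝ → ℝ) :
    hA.cfc f * hA.cfc g = hA.cfc (fun x => f x * g x) := by
  have key {a b c d e f : Matrix n n ℂ} :
      (a * b * c) * (d * e * f) = a * (b * (c * d) * e) * f := by
    simp only [mul_assoc]
  simp only [Matrix.IsHermitian.cfc, key, Unitary.conjStarAlgAut_apply, SetLike.coe_mem, Unitary.star_mul_self_of_mem, mul_one,
    diagonal_mul_diagonal, Function.comp_apply]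
  congr! with i
  simp

lemma cfc_id (hA : A.IsHermitian) : hA.cfc id = A := by
  conv_rhs => rw [hA.spectral_theorem]
  rfl

lemma cfc_herm (hA : A.IsHermitian) (f : ℝ → ℝ) : (hA.cfc f).IsHermitian := by
  have : Matrix.IsHermitian
      (diagonal (RCLike.ofReal ∘ f ∘ hA.eigenvalues) : Matrix n n ℂ) := by
    rw [Matrix.IsHermitian, diagonal_conjTranspose]
    congr! with i
    simp [Pi.star_def, Function.comp_def]
  simpa [Matrix.IsHermitian.cfc, star_eq_conjTranspose, mul_assoc] using
    (Matrix.isHermitian_mul_mul_conjTranspose (hA.eigenvectorUnitary : Matrix n n ℂ) this)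

end Aux

/-- for an RLD-parallel family `ρ_t = ∑ p_t(x) |φ_x⟩⟨φ_x|`, the RLD
Fisher information equals the classical Fisher information of `{p_t}`. -/
theorem stmt_10 {d r : ℕ} (φ : Fin r → (Fin d → ℂ)) (p : ℝ → Fin r → ℝ)
    (hind : LinearIndependent ℂ φ) (hunit : ∀ x, ∑ i, ‖φ x i‖ ^ 2 = 1)
    (hprob : ∀ t, IsProb (p t)) (hpos : ∀ t x, 0 < p t x)
    (hdiff : ∀ x, Differentiable ℝ (fun t => p t x)) (t : ℝ) :
    JR (∑ x, ((p t x : ℝ) : ℂ) • outer (φ x))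
       (∑ x, ((deriv (fun s => p s x) t : ℝ) : ℂ) • outer (φ x))
      = ∑ x, (deriv (fun s => p s x) t) ^ 2 / p t x := by
  classical
  set N : Matrix (Fin d) (Fin r) ℂ := Matrix.of fun i x => φ x i with hN
  have hfact : ∀ (c : Fin r → ℝ),
      (∑ x, ((c x : ℝ) : ℂ) • outer (φ x))
        = N * Matrix.diagonal (fun x => (c x : ℂ)) * Nᴴ := by
    intro c
    ext i j
    rw [Matrix.mul_apply]
    simp only [Matrix.mul_diagonal, Matrix.conjTranspose_apply, Matrix.sum_apply,
      Matrix.smul_apply, outer, Matrix.vecMulVec_apply, Pi.star_apply, smul_eq_mul,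
      hN, Matrix.of_apply]
    exact Finset.sum_congr rfl fun x _ => by ring
  rw [show (∑ x, ((p t x : ℝ) : ℂ) • outer (φ x))
      = N * Matrix.diagonal (fun x => ((p t x : ℝ) : ℂ)) * Nᴴ from hfact _,
    show (∑ x, ((deriv (fun s => p s x) t : ℝ) : ℂ) • outer (φ x))
      = N * Matrix.diagonal (fun x => ((deriv (fun s => p s x) t : ℝ) : ℂ)) * Nᴴ from hfact _]
  set D : Matrix (Fin r) (Fin r) ℂ := Matrix.diagonal (fun x => ((p t x : ℝ) : ℂ)) with hD
  set Q : Matrix (Fin r) (Fin r) ℂ :=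
    Matrix.diagonal (fun x => ((deriv (fun s => p s x) t : ℝ) : ℂ)) with hQdef
  set Dinv : Matrix (Fin r) (Fin r) ℂ :=
    Matrix.diagonal (fun x => (((p t x : ℝ) : ℂ))⁻¹) with hDi
  set G : Matrix (Fin r) (Fin r) ℂ := Nᴴ * N with hG
  set ρ : Matrix (Fin d) (Fin d) ℂ := N * D * Nᴴ with hrho
  have hpne : ∀ x, ((p t x : ℝ) : ℂ) ≠ 0 := fun x => by exact_mod_cast (hpos t x).ne'
  have hDpsd : D.PosSemidef := by
    rw [hD, Matrix.posSemidef_diagonal_iff]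
    intro x
    exact_mod_cast (hpos t x).le
  have hρpsd : ρ.PosSemidef := hDpsd.mul_mul_conjTranspose_same N
  have hherm : ρ.IsHermitian := hρpsd.1
  set pf : ℝ → ℝ := fun s => if s = 0 then 0 else s⁻¹ with hpf
  set P : Matrix (Fin d) (Fin d) ℂ := hherm.cfc pf with hP
  have hmp : mpinv ρ = P := by rw [mpinv, matFun, dif_pos hherm]
  -- ρ * P * ρ = ρ
  have key : ρ * P * ρ = ρ := by
    conv_lhs => rw [show ρ = hherm.cfc id from (Aux.cfc_id hherm).symm]
    rw [hP, Aux.cfc_mul, Aux.cfc_mul]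
    conv_rhs => rw [show ρ = hherm.cfc id from (Aux.cfc_id hherm).symm]
    refine congrArg (Matrix.IsHermitian.cfc hherm) (funext fun s => ?_)
    by_cases h : s = 0
    · simp [hpf, h]
    · simp only [hpf, if_neg h, id]
      field_simp
  -- Gram matrix invertible
  have hGdet : IsUnit G.det := by
    rw [isUnit_iff_ne_zero]
    intro h
    obtain ⟨v, hv0, hv⟩ := Matrix.exists_mulVec_eq_zero_iff.mpr h
    have hNv : N *ᵥ v = 0 := by
      have h1 : Nᴴ *ᵥ (N *ᵥ v) = 0 := by rw [Matrix.mulVec_mulVec, ← hG]; exact hv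
      have h2 : star (N *ᵥ v) ⬝ᵥ (N *ᵥ v) = 0 := by
        rw [Matrix.star_mulVec, ← Matrix.dotProduct_mulVec, h1, dotProduct_zero]
      exact dotProduct_star_self_eq_zero.mp h2
    apply hv0
    have hsum : ∑ x, v x • φ x = 0 := by
      funext i
      have := congrFun hNv i
      simpa [Matrix.mulVec, dotProduct, hN, Finset.sum_apply, mul_comm] using this
    exact funext fun x => Fintype.linearIndependent_iff.mp hind v hsum x
  have hDD : D * Dinv = 1 := by
    rw [hD, hDi, Matrix.diagonal_mul_diagonal,
      show (fun i => ((p t i : ℝ) : ℂ) * (((p t i : ℝ) : ℂ))⁻¹) = fun _ => (1 : ℂ) from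
        funext fun x => mul_inv_cancel₀ (hpne x)]
    exact Matrix.diagonal_one
  set W : Matrix (Fin d) (Fin r) ℂ := N * G⁻¹ * Dinv with hW
  have hρW : ρ * W = N := by
    rw [hrho, hW]
    calc N * D * Nᴴ * (N * G⁻¹ * Dinv)
        = N * D * (Nᴴ * N * G⁻¹ * Dinv) := by simp only [Matrix.mul_assoc]
      _ = N * D * (G * G⁻¹ * Dinv) := by rw [← hG]
      _ = N * D * Dinv := by rw [Matrix.mul_nonsing_inv G hGdet, Matrix.one_mul]
      _ = N * (D * Dinv) := by rw [Matrix.mul_assoc]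
      _ = N := by rw [hDD, Matrix.mul_one]
  have hNs : Nᴴ = Wᴴ * ρ := by
    rw [← hρW, Matrix.conjTranspose_mul, hherm.eq]
  have hGherm : Gᴴ = G := by
    rw [hG, Matrix.conjTranspose_mul, Matrix.conjTranspose_conjTranspose]
  have hDinvH : Dinvᴴ = Dinv := by
    rw [hDi, Matrix.diagonal_conjTranspose]
    congr 1
    funext x
    simp [Pi.star_def, Complex.conj_ofReal]
  have hWH : Wᴴ = Dinv * G⁻¹ * Nᴴ := by
    rw [hW, Matrix.conjTranspose_mul, Matrix.conjTranspose_mul, hDinvH,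
      Matrix.conjTranspose_nonsing_inv, hGherm, Matrix.mul_assoc]
  have hNPN : Nᴴ * P * N = Dinv := by
    calc Nᴴ * P * N = Wᴴ * ρ * P * (ρ * W) := by rw [hNs, ← hρW]
      _ = Wᴴ * (ρ * P * ρ) * W := by simp only [Matrix.mul_assoc]
      _ = Wᴴ * ρ * W := by rw [key]
      _ = Wᴴ * N := by rw [Matrix.mul_assoc, hρW]
      _ = Dinv * G⁻¹ * (Nᴴ * N) := by rw [hWH, Matrix.mul_assoc]
      _ = Dinv * (G⁻¹ * G) := by rw [← hG, Matrix.mul_assoc]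
      _ = Dinv := by rw [Matrix.nonsing_inv_mul G hGdet, Matrix.mul_one]
  -- final trace computation
  have htr : N * Q * Nᴴ * P * (N * Q * Nᴴ) = N * (Q * Dinv * Q) * Nᴴ := by
    calc N * Q * Nᴴ * P * (N * Q * Nᴴ)
        = N * Q * (Nᴴ * P * N) * (Q * Nᴴ) := by simp only [Matrix.mul_assoc]
      _ = N * Q * Dinv * (Q * Nᴴ) := by rw [hNPN]
      _ = N * (Q * Dinv * Q) * Nᴴ := by simp only [Matrix.mul_assoc]
  have hQDQ : Q * Dinv * Q = Matrix.diagonal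
      (fun x => ((deriv (fun s => p s x) t : ℝ) : ℂ) * (((p t x : ℝ) : ℂ))⁻¹
        * ((deriv (fun s => p s x) t : ℝ) : ℂ)) := by
    rw [hQdef, hDi, Matrix.diagonal_mul_diagonal, Matrix.diagonal_mul_diagonal]
  have hGdiag : ∀ x, G x x = 1 := by
    intro x
    rw [hG]
    simp only [Matrix.mul_apply, Matrix.conjTranspose_apply, hN, Matrix.of_apply]
    have h1 : ∀ i, (starRingEnd ℂ) (φ x i) * φ x i = ((‖φ x i‖ ^ 2 : ℝ) : ℂ) := by
      intro i
      rw [Complex.normSq_eq_conj_mul_self.symm]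
      norm_cast
      rw [Complex.normSq_eq_norm_sq]
    calc (∑ i, (starRingEnd ℂ) (φ x i) * φ x i) = ∑ i, ((‖φ x i‖ ^ 2 : ℝ) : ℂ) :=
          Finset.sum_congr rfl fun i _ => h1 i
      _ = (((∑ i, ‖φ x i‖ ^ 2 : ℝ)) : ℂ) := by push_cast; ring
      _ = 1 := by rw [hunit x]; norm_num
  have htrd : Matrix.trace (N * (Q * Dinv * Q) * Nᴴ)
      = ∑ x, (((deriv (fun s => p s x) t : ℝ) : ℂ) * (((p t x : ℝ) : ℂ))⁻¹
        * ((deriv (fun s => p s x) t : ℝ) : ℂ)) * G x x := by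
    rw [Matrix.mul_assoc, Matrix.trace_mul_comm, Matrix.mul_assoc, ← hG, hQDQ]
    simp [Matrix.trace, Matrix.diag, Matrix.diagonal_mul]
  simp only [JR, hmp, htr, htrd]
  have hsum : (∑ x, (((deriv (fun s => p s x) t : ℝ) : ℂ) * (((p t x : ℝ) : ℂ))⁻¹
        * ((deriv (fun s => p s x) t : ℝ) : ℂ)) * G x x)
      = (((∑ x, (deriv (fun s => p s x) t) ^ 2 / p t x : ℝ)) : ℂ) := by
    push_cast
    refine Finset.sum_congr rfl fun x _ => ?_
    rw [hGdiag x, mul_one]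
    ring
  rw [hsum, Complex.ofReal_re]
end

section
/- (Reverse estimation bound) Let $\{\rho_\theta\}$ be a smooth one-parameter family of density operators on a finite-dimensional Hilbert space with strictly positive $\rho_\theta$. For every classical family $\{p_\theta\}$ of probability distributions on a finite set and every classical-to-quantum channel $\Phi$ with $\Phi(p_\theta) = \rho_\theta$ and $\Phi(dp_\theta/d\theta) = d\rho_\theta/d\theta$ at a point $\theta$, the classical Fisher information satisfies $J_{p_\theta} \geq J^R_{\rho_\theta}$, where $J^R$ is the RLD Fisher information. -/
open Matrix BigOperators Filter
open scoped ComplexOrder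

lemma mpinv_isHermitian {d : ℕ} {ρ : Matrix (Fin d) (Fin d) ℂ} (h : ρ.IsHermitian) :
    (mpinv ρ).IsHermitian := by
  rw [mpinv, matFun, dif_pos h, Matrix.IsHermitian.cfc, Unitary.conjStarAlgAut_apply, star_eq_conjTranspose]
  exact isHermitian_mul_mul_conjTranspose _
    (isHermitian_diagonal_of_self_adjoint _ (by
      funext i
      simp [Pi.star_def, Complex.conj_ofReal]))

lemma mul_mpinv {d : ℕ} {ρ : Matrix (Fin d) (Fin d) ℂ} (hpd : ρ.PosDef) :
    ρ * mpinv ρ = 1 := by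
  have h : ρ.IsHermitian := hpd.isHermitian
  rw [mpinv, matFun, dif_pos h, Matrix.IsHermitian.cfc, Unitary.conjStarAlgAut_apply]
  set U : Matrix (Fin d) (Fin d) ℂ := (Matrix.IsHermitian.eigenvectorUnitary h : Matrix (Fin d) (Fin d) ℂ) with hU
  have hUU : star U * U = 1 := mem_unitaryGroup_iff'.mp h.eigenvectorUnitary.2
  have hUU' : U * star U = 1 := mem_unitaryGroup_iff.mp h.eigenvectorUnitary.2
  have step : ρ * (U * diagonal (RCLike.ofReal ∘ (fun t => if t = 0 then 0 else t⁻¹) ∘ h.eigenvalues) * star U)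
      = (U * diagonal (RCLike.ofReal ∘ h.eigenvalues) * star U) * (U * diagonal (RCLike.ofReal ∘ (fun t => if t = 0 then 0 else t⁻¹) ∘ h.eigenvalues) * star U) := by
    have hs := h.spectral_theorem
    rw [Unitary.conjStarAlgAut_apply, ← hU] at hs
    rw [← hs]
  rw [step]
  have hmid : star U * (U * (diagonal (RCLike.ofReal ∘ (fun t => if t = 0 then 0 else t⁻¹) ∘ h.eigenvalues) * star U))
      = diagonal (RCLike.ofReal ∘ (fun t => if t = 0 then 0 else t⁻¹) ∘ h.eigenvalues) * star U := by
    rw [← mul_assoc, hUU, one_mul]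
  simp only [mul_assoc]
  rw [hmid, ← mul_assoc (diagonal _), diagonal_mul_diagonal]
  have : (fun i => (RCLike.ofReal ∘ h.eigenvalues) i * (RCLike.ofReal ∘ (fun t => if t = 0 then 0 else t⁻¹) ∘ h.eigenvalues) i) = (fun _ => (1:ℂ)) := by
    funext i
    have hpos := hpd.eigenvalues_pos i
    simp only [Function.comp, hpos.ne', if_false]
    norm_cast
    field_simp
    simp
  rw [this]
  rw [show Matrix.diagonal (fun _ => (1:ℂ)) = (1 : Matrix (Fin d) (Fin d) ℂ) from diagonal_one]
  rw [← mul_assoc]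
  simp [hUU']

lemma key_ineq {d : ℕ} (Φ : Matrix (Fin d) (Fin d) ℂ) (hΦ : Φ.PosSemidef)
    (p dp : ℝ) (hp : 0 ≤ p) (h0 : p = 0 → dp = 0) (u v : Fin d → ℂ) :
    0 ≤ (p:ℂ) * (star u ⬝ᵥ Φ *ᵥ u) + (dp:ℂ) * (star u ⬝ᵥ Φ *ᵥ v)
      + (dp:ℂ) * (star v ⬝ᵥ Φ *ᵥ u)
      + (((if p = 0 then 0 else dp^2/p : ℝ)):ℂ) * (star v ⬝ᵥ Φ *ᵥ v) := by
  rcases eq_or_lt_of_le hp with h|h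
  · simp [← h, h0 h.symm]
  · have hpne : p ≠ 0 := h.ne'
    rw [if_neg hpne]
    set s : ℝ := Real.sqrt p with hs
    have hs0 : s ≠ 0 := by positivity
    set a : ℂ := (s : ℂ) with ha
    set b : ℂ := ((dp / s : ℝ) : ℂ) with hb
    have key := hΦ.dotProduct_mulVec_nonneg (a • u + b • v)
    have expand : star (a • u + b • v) ⬝ᵥ Φ *ᵥ (a • u + b • v)
        = a * a * (star u ⬝ᵥ Φ *ᵥ u) + a * b * (star u ⬝ᵥ Φ *ᵥ v)
          + b * a * (star v ⬝ᵥ Φ *ᵥ u) + b * b * (star v ⬝ᵥ Φ *ᵥ v) := by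
      simp only [star_add, star_smul, mulVec_add, mulVec_smul, dotProduct_add,
        add_dotProduct, smul_dotProduct, dotProduct_smul, smul_eq_mul, ha, hb,
        RCLike.star_def, Complex.conj_ofReal]
      ring
    have e1 : a * a = (p : ℂ) := by
      rw [ha]; norm_cast; exact Real.mul_self_sqrt hp
    have e2 : a * b = (dp : ℂ) := by
      rw [ha, hb]; norm_cast; field_simp
    have e3 : b * a = (dp : ℂ) := by rw [mul_comm]; exact e2
    have e4 : b * b = ((dp^2/p : ℝ) : ℂ) := by
      rw [hb]; norm_cast
      rw [div_mul_div_comm, ← pow_two, ← pow_two, hs, Real.sq_sqrt hp]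
    rw [expand, e1, e2, e3, e4] at key
    exact key

lemma dot_sum_smul {d m : ℕ} (a : Fin m → ℝ) (A : Fin m → Matrix (Fin d) (Fin d) ℂ)
    (u v : Fin d → ℂ) :
    u ⬝ᵥ (∑ x, (a x : ℂ) • A x) *ᵥ v = ∑ x, (a x : ℂ) * (u ⬝ᵥ (A x) *ᵥ v) := by
  have hmv : (∑ x, (a x : ℂ) • A x) *ᵥ v = ∑ x, ((a x : ℂ) • A x) *ᵥ v := by
    ext i
    simp only [mulVec, dotProduct, Finset.sum_apply, Matrix.sum_apply, Finset.sum_mul]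
    rw [Finset.sum_comm]
  rw [hmv]
  have hdp : u ⬝ᵥ (∑ x, ((a x : ℂ) • A x) *ᵥ v) = ∑ x, u ⬝ᵥ (((a x : ℂ) • A x) *ᵥ v) := by
    simp only [dotProduct, Finset.sum_apply, Finset.mul_sum]
    rw [Finset.sum_comm]
  rw [hdp]
  refine Finset.sum_congr rfl fun x _ => ?_
  rw [smul_mulVec, dotProduct_smul, smul_eq_mul]


/-- (reverse estimation bound) for any tangent reverse estimation
`(Φ, {p, dp})` of a strictly positive family `{ρ, X}` at a point, the classical Fisher
information is at least the RLD Fisher information. -/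
theorem stmt_11 {d m : ℕ} (ρ X : Matrix (Fin d) (Fin d) ℂ)
    (hρ : IsDensity ρ) (hpd : ρ.PosDef) (hX : X.IsHermitian)
    (p dp : Fin m → ℝ) (hp : IsProb p) (hdp : ∑ x, dp x = 0)
    (hfin : ∀ x, p x = 0 → dp x = 0)
    (Φ : Fin m → Matrix (Fin d) (Fin d) ℂ) (hΦ : ∀ x, IsDensity (Φ x))
    (h1 : ∑ x, (p x : ℂ) • Φ x = ρ) (h2 : ∑ x, (dp x : ℂ) • Φ x = X) :
    (∑ x, if p x = 0 then 0 else (dp x) ^ 2 / p x) ≥ JR ρ X := by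
  classical
  have h : ρ.IsHermitian := hpd.isHermitian
  set R : Matrix (Fin d) (Fin d) ℂ := mpinv ρ with hRdef
  have hRH : R.IsHermitian := mpinv_isHermitian h
  have hρR : ρ * R = 1 := mul_mpinv hpd
  have hRρ : R * ρ = 1 := mul_eq_one_comm.mp hρR
  set c : Fin m → ℝ := fun x => if p x = 0 then 0 else (dp x) ^ 2 / p x with hc
  set Y : Matrix (Fin d) (Fin d) ℂ := ∑ x, (c x : ℂ) • Φ x with hY
  set M : Matrix (Fin d) (Fin d) ℂ := X * R * X with hM
  have hpos : ∀ v : Fin d → ℂ, 0 ≤ star v ⬝ᵥ (Y - M) *ᵥ v := by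
    intro v
    set u : Fin d → ℂ := -((R * X) *ᵥ v) with hu
    have hsum : 0 ≤ ∑ x, ((p x:ℂ) * (star u ⬝ᵥ Φ x *ᵥ u) + (dp x:ℂ) * (star u ⬝ᵥ Φ x *ᵥ v)
        + (dp x:ℂ) * (star v ⬝ᵥ Φ x *ᵥ u) + (c x:ℂ) * (star v ⬝ᵥ Φ x *ᵥ v)) :=
      Finset.sum_nonneg fun x _ => key_ineq (Φ x) (hΦ x).1 (p x) (dp x) (hp.1 x) (hfin x) u v
    have hsum_eq : star u ⬝ᵥ ρ *ᵥ u + star u ⬝ᵥ X *ᵥ v + star v ⬝ᵥ X *ᵥ u + star v ⬝ᵥ Y *ᵥ v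
        = ∑ x, ((p x:ℂ) * (star u ⬝ᵥ Φ x *ᵥ u) + (dp x:ℂ) * (star u ⬝ᵥ Φ x *ᵥ v)
          + (dp x:ℂ) * (star v ⬝ᵥ Φ x *ᵥ u) + (c x:ℂ) * (star v ⬝ᵥ Φ x *ᵥ v)) := by
      rw [← h1, ← h2, hY, dot_sum_smul, dot_sum_smul, dot_sum_smul, dot_sum_smul,
        ← Finset.sum_add_distrib, ← Finset.sum_add_distrib, ← Finset.sum_add_distrib]
    have hXRX : ρ * (R * X) = X := by rw [← mul_assoc, hρR, one_mul]
    have hCT : (R * X)ᴴ = X * R := by rw [conjTranspose_mul, hRH.eq, hX.eq]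
    have c1 : star u ⬝ᵥ ρ *ᵥ u = star v ⬝ᵥ M *ᵥ v := by
      rw [hu, hM, star_neg, star_mulVec, mulVec_neg, mulVec_mulVec, hXRX, hCT,
        neg_dotProduct, dotProduct_neg, neg_neg, ← dotProduct_mulVec, mulVec_mulVec]
    have c2 : star u ⬝ᵥ X *ᵥ v = -(star v ⬝ᵥ M *ᵥ v) := by
      rw [hu, hM, star_neg, star_mulVec, hCT, neg_dotProduct, ← dotProduct_mulVec,
        mulVec_mulVec, mul_assoc]
    have c3 : star v ⬝ᵥ X *ᵥ u = -(star v ⬝ᵥ M *ᵥ v) := by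
      rw [hu, hM, mulVec_neg, mulVec_mulVec, dotProduct_neg, ← mul_assoc]
    have hfin2 : star v ⬝ᵥ (Y - M) *ᵥ v = star v ⬝ᵥ Y *ᵥ v - star v ⬝ᵥ M *ᵥ v := by
      rw [sub_mulVec, dotProduct_sub]
    have hkey := hsum
    rw [← hsum_eq, c1, c2, c3] at hkey
    have hcalc : star v ⬝ᵥ M *ᵥ v + -(star v ⬝ᵥ M *ᵥ v) + -(star v ⬝ᵥ M *ᵥ v) + star v ⬝ᵥ Y *ᵥ v
        = star v ⬝ᵥ Y *ᵥ v - star v ⬝ᵥ M *ᵥ v := by ring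
    rw [hcalc] at hkey
    rw [hfin2]
    exact hkey
  have hdiag : ∀ i, 0 ≤ (Y - M) i i := by
    intro i
    have hstar : star (Pi.single i 1 : Fin d → ℂ) = Pi.single i 1 := by
      ext j
      by_cases hji : j = i <;> simp [Pi.single_apply, hji]
    have := hpos (Pi.single i 1)
    rw [hstar] at this
    simpa [mulVec_single, single_dotProduct] using this
  have htr : 0 ≤ Matrix.trace (Y - M) := by
    rw [Matrix.trace]
    exact Finset.sum_nonneg fun i _ => hdiag i
  rw [Matrix.trace_sub] at htr
  have hre : (Matrix.trace M).re ≤ (Matrix.trace Y).re := by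
    have h' := (Complex.le_def.mp htr).1
    simp only [Complex.zero_re, Complex.sub_re] at h'
    linarith
  have hYtr : Matrix.trace Y = ((∑ x, c x : ℝ) : ℂ) := by
    rw [hY, Matrix.trace_sum]
    rw [Complex.ofReal_sum]
    refine Finset.sum_congr rfl fun x _ => ?_
    rw [Matrix.trace_smul, (hΦ x).2, smul_eq_mul, mul_one]
  have hJR : JR ρ X = (Matrix.trace M).re := by rw [JR, hM, hRdef]
  rw [ge_iff_le, hJR]
  calc (Matrix.trace M).re ≤ (Matrix.trace Y).re := hre
    _ = ∑ x, c x := by rw [hYtr, Complex.ofReal_re]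
    _ = ∑ x, if p x = 0 then 0 else (dp x) ^ 2 / p x := rfl
end

section
/- The RLD Fisher information is monotone under CPTP maps: for a smooth one-parameter family $\{\rho_\theta\}$ of strictly positive density operators and any CPTP map $\Lambda$ (such that $\Lambda(\rho_\theta)$ admits an RLD), $J^R_{\Lambda(\rho_\theta)} \leq J^R_{\rho_\theta}$. -/
open Matrix BigOperators Filter
open scoped ComplexOrder

namespace AuxRLD

open Matrix

variable {n : Type} [Fintype n] [DecidableEq n] {A : Matrix n n ℂ}

lemma star_mul_self_unit (hA : A.IsHermitian) :
    star (hA.eigenvectorUnitary : Matrix n n ℂ) * (hA.eigenvectorUnitary : Matrix n n ℂ) = 1 :=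
  Unitary.star_mul_self_of_mem (SetLike.coe_mem _)

lemma mul_star_self_unit (hA : A.IsHermitian) :
    (hA.eigenvectorUnitary : Matrix n n ℂ) * star (hA.eigenvectorUnitary : Matrix n n ℂ) = 1 :=
  Unitary.mul_star_self_of_mem (SetLike.coe_mem _)

lemma cfc_herm (hA : A.IsHermitian) (f : ℝ → ℝ) : (hA.cfc f).IsHermitian := by
  unfold Matrix.IsHermitian.cfc
  rw [Unitary.conjStarAlgAut_apply, Matrix.star_eq_conjTranspose]
  apply isHermitian_mul_mul_conjTranspose
  apply isHermitian_diagonal_of_self_adjoint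
  funext i
  simp [Pi.star_apply, RCLike.star_def, RCLike.conj_ofReal]

lemma cfc_mul (hA : A.IsHermitian) (f g : ℝ → ℝ) :
    hA.cfc f * hA.cfc g = hA.cfc (fun t => f t * g t) := by
  unfold Matrix.IsHermitian.cfc
  have h := star_mul_self_unit hA
  calc ((hA.eigenvectorUnitary : Matrix n n ℂ) * diagonal (RCLike.ofReal ∘ f ∘ hA.eigenvalues)
        * star (hA.eigenvectorUnitary : Matrix n n ℂ))
      * ((hA.eigenvectorUnitary : Matrix n n ℂ) * diagonal (RCLike.ofReal ∘ g ∘ hA.eigenvalues)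
        * star (hA.eigenvectorUnitary : Matrix n n ℂ))
      = (hA.eigenvectorUnitary : Matrix n n ℂ) * (diagonal (RCLike.ofReal ∘ f ∘ hA.eigenvalues)
        * ((star (hA.eigenvectorUnitary : Matrix n n ℂ) * (hA.eigenvectorUnitary : Matrix n n ℂ))
        * diagonal (RCLike.ofReal ∘ g ∘ hA.eigenvalues)))
        * star (hA.eigenvectorUnitary : Matrix n n ℂ) := by simp only [mul_assoc]
    _ = (hA.eigenvectorUnitary : Matrix n n ℂ)
        * diagonal (RCLike.ofReal ∘ (fun t => f t * g t) ∘ hA.eigenvalues)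
        * star (hA.eigenvectorUnitary : Matrix n n ℂ) := by
          rw [h, one_mul, diagonal_mul_diagonal]
          have hd : (fun i => (RCLike.ofReal ∘ f ∘ hA.eigenvalues) i
              * (RCLike.ofReal ∘ g ∘ hA.eigenvalues) i)
              = (RCLike.ofReal ∘ (fun t => f t * g t) ∘ hA.eigenvalues : n → ℂ) := by
            funext i
            simp [Function.comp]
          rw [hd, mul_assoc]

lemma cfc_id (hA : A.IsHermitian) : hA.cfc (fun t => t) = A := by
  unfold Matrix.IsHermitian.cfc
  exact hA.spectral_theorem.symm

lemma cfc_eq_one (hA : A.IsHermitian) (f : ℝ → ℝ)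
    (h : ∀ i, f (hA.eigenvalues i) = 1) : hA.cfc f = 1 := by
  unfold Matrix.IsHermitian.cfc
  have : diagonal (RCLike.ofReal ∘ f ∘ hA.eigenvalues) = (1 : Matrix n n ℂ) := by
    have h2 : (RCLike.ofReal ∘ f ∘ hA.eigenvalues : n → ℂ) = fun _ => 1 := by
      funext i
      simp [Function.comp, h i]
    rw [h2]
    exact diagonal_one
  rw [Unitary.conjStarAlgAut_apply, this, mul_one, mul_star_self_unit hA]

lemma mpinv_isHermitian (hA : A.IsHermitian) : (mpinv A).IsHermitian := by
  unfold mpinv matFun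
  rw [dif_pos hA]
  exact cfc_herm hA _

lemma mpinv_mul_mul (hA : A.IsHermitian) : mpinv A * A * mpinv A = mpinv A := by
  unfold mpinv matFun
  rw [dif_pos hA]
  have h1 : hA.cfc (fun t => if t = 0 then 0 else t⁻¹) * A
        * hA.cfc (fun t => if t = 0 then 0 else t⁻¹)
      = hA.cfc (fun t => if t = 0 then 0 else t⁻¹) * hA.cfc (fun t => t)
        * hA.cfc (fun t => if t = 0 then 0 else t⁻¹) := by rw [cfc_id]
  rw [h1, cfc_mul, cfc_mul]
  refine congrArg _ (funext fun t => ?_)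
  by_cases h : t = 0
  · simp [h]
  · simp only [h, if_false]
    rw [inv_mul_cancel₀ h, one_mul]

lemma mpinv_mul_self (hA : A.PosDef) : mpinv A * A = 1 := by
  unfold mpinv matFun
  rw [dif_pos hA.isHermitian]
  have h1 : hA.isHermitian.cfc (fun t => if t = 0 then 0 else t⁻¹) * A
      = hA.isHermitian.cfc (fun t => if t = 0 then 0 else t⁻¹)
        * hA.isHermitian.cfc (fun t => t) := by rw [cfc_id]
  rw [h1, cfc_mul]
  apply cfc_eq_one
  intro i
  have := hA.eigenvalues_pos i
  simp [ne_of_gt this, inv_mul_cancel₀ (ne_of_gt this)]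

lemma self_mul_mpinv (hA : A.PosDef) : A * mpinv A = 1 := by
  unfold mpinv matFun
  rw [dif_pos hA.isHermitian]
  have h1 : A * hA.isHermitian.cfc (fun t => if t = 0 then 0 else t⁻¹)
      = hA.isHermitian.cfc (fun t => t)
        * hA.isHermitian.cfc (fun t => if t = 0 then 0 else t⁻¹) := by rw [cfc_id]
  rw [h1, cfc_mul]
  apply cfc_eq_one
  intro i
  have := hA.eigenvalues_pos i
  simp [ne_of_gt this, mul_inv_cancel₀ (ne_of_gt this)]

lemma trace_re_nonneg {M : Matrix n n ℂ} (hM : M.PosSemidef) : 0 ≤ M.trace.re := by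
  have h : ∀ i, 0 ≤ (M i i).re := by
    intro i
    have h0 := hM.dotProduct_mulVec_nonneg (Pi.single i 1)
    have : star (Pi.single i 1 : n → ℂ) ⬝ᵥ M *ᵥ Pi.single i 1 = M i i := by
      simp [Matrix.mulVec_single, dotProduct, Pi.single_apply,
        apply_ite (star : ℂ → ℂ), ite_mul, Finset.sum_ite_eq]
    rw [this] at h0
    exact (Complex.le_def.mp h0).1
  rw [Matrix.trace]
  rw [Complex.re_sum]
  exact Finset.sum_nonneg fun i _ => h i

end AuxRLD

set_option maxHeartbeats 1000000 in
/-- the RLD Fisher information is monotone under CPTP maps. -/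
theorem stmt_12 {d₁ d₂ : ℕ} (ρ X : Matrix (Fin d₁) (Fin d₁) ℂ)
    (hρ : IsDensity ρ) (hpd : ρ.PosDef) (hX : X.IsHermitian) (hXtr : X.trace = 0)
    (Λ : Matrix (Fin d₁) (Fin d₁) ℂ → Matrix (Fin d₂) (Fin d₂) ℂ) (hΛ : IsCPTP Λ)
    (hRLD : msupp (Λ X) ≤ msupp (Λ ρ)) :
    JR (Λ ρ) (Λ X) ≤ JR ρ X := by
  classical
  obtain ⟨k, K, hK1, hK2⟩ := hΛ
  have hρps : ρ.PosSemidef := hρ.1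
  open scoped MatrixOrder in
  obtain ⟨R, hRdef⟩ : ∃ Y : Matrix (Fin d₁) (Fin d₁) ℂ, Y = CFC.sqrt ρ := ⟨_, rfl⟩
  open scoped MatrixOrder in
  have hRH : R.IsHermitian := hRdef ▸ (CFC.sqrt_nonneg ρ).posSemidef.isHermitian
  open scoped MatrixOrder in
  have hRR : R * R = ρ := by rw [hRdef]; exact CFC.sqrt_mul_sqrt_self ρ hρps.nonneg
  rw [hK2, hK2]
  obtain ⟨σ, hσdef⟩ : ∃ Y : Matrix (Fin d₂) (Fin d₂) ℂ, Y = ∑ i, K i * ρ * (K i)ᴴ := ⟨_, rfl⟩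
  obtain ⟨A, hAdef⟩ : ∃ Y : Matrix (Fin d₂) (Fin d₂) ℂ, Y = ∑ i, K i * X * (K i)ᴴ := ⟨_, rfl⟩
  rw [← hσdef, ← hAdef]
  have hσps : σ.PosSemidef := by
    rw [hσdef]
    exact Finset.sum_induction _ _ (fun a b ha hb => ha.add hb) (Matrix.PosSemidef.zero)
      (fun i _ => hρps.mul_mul_conjTranspose_same (K i))
  have hσH : σ.IsHermitian := hσps.isHermitian
  have hAH : A.IsHermitian := by
    rw [hAdef]
    simp only [Matrix.IsHermitian, conjTranspose_sum, conjTranspose_mul,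
      conjTranspose_conjTranspose, hX.eq, Matrix.mul_assoc]
  obtain ⟨P, hPdef⟩ : ∃ Y : Matrix (Fin d₂) (Fin d₂) ℂ, Y = mpinv σ := ⟨_, rfl⟩
  have hPH : P.IsHermitian := hPdef ▸ AuxRLD.mpinv_isHermitian hσH
  have hPσP : P * σ * P = P := by rw [hPdef]; exact AuxRLD.mpinv_mul_mul hσH
  obtain ⟨Q, hQdef⟩ : ∃ Y : Matrix (Fin d₁) (Fin d₁) ℂ, Y = mpinv ρ := ⟨_, rfl⟩
  have hQH : Q.IsHermitian := hQdef ▸ AuxRLD.mpinv_isHermitian hpd.isHermitian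
  have hQρ : Q * ρ = 1 := by rw [hQdef]; exact AuxRLD.mpinv_mul_self hpd
  have hρQ : ρ * Q = 1 := by rw [hQdef]; exact AuxRLD.self_mul_mpinv hpd
  obtain ⟨Z, hZdef⟩ : ∃ Y : Matrix (Fin d₂) (Fin d₂) ℂ, Y = P * A := ⟨_, rfl⟩
  have hZH : Zᴴ = A * P := by rw [hZdef, conjTranspose_mul, hPH.eq, hAH.eq]
  obtain ⟨W, hWdef⟩ : ∃ Y : Matrix (Fin d₁) (Fin d₁) ℂ, Y = ∑ i, (K i)ᴴ * Z * K i := ⟨_, rfl⟩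
  have hWH : Wᴴ = ∑ i, (K i)ᴴ * Zᴴ * K i := by
    rw [hWdef]
    simp [conjTranspose_sum, conjTranspose_mul, Matrix.mul_assoc]
  -- the three trace quantities
  have e1 : Matrix.trace (A * P * A) = Matrix.trace (Zᴴ * A) := by rw [hZH]
  have e2 : Matrix.trace (Zᴴ * σ * Z) = Matrix.trace (Zᴴ * A) := by
    have h : Zᴴ * σ * Z = Zᴴ * A := by
      rw [hZH, hZdef]
      calc A * P * σ * (P * A) = A * (P * σ * P) * A := by simp only [Matrix.mul_assoc]
        _ = A * P * A := by rw [hPσP]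
    rw [h, hZH]
  have e3 : Matrix.trace (Zᴴ * A) = Matrix.trace (Wᴴ * X) := by
    calc Matrix.trace (Zᴴ * A) = ∑ i, Matrix.trace (Zᴴ * (K i * X * (K i)ᴴ)) := by
          rw [hAdef, Finset.mul_sum, trace_sum]
      _ = ∑ i, Matrix.trace (((K i)ᴴ * Zᴴ * K i) * X) := by
          refine Finset.sum_congr rfl fun i _ => ?_
          rw [show Zᴴ * (K i * X * (K i)ᴴ) = (Zᴴ * K i) * X * (K i)ᴴ by
            simp only [Matrix.mul_assoc], Matrix.trace_mul_cycle]
          congr 1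
          simp only [Matrix.mul_assoc]
      _ = Matrix.trace (Wᴴ * X) := by rw [hWH, Finset.sum_mul, trace_sum]
  -- Schwarz step
  obtain ⟨C, hCdef⟩ : ∃ Y : Fin k → Matrix (Fin d₂) (Fin d₁) ℂ, Y = fun i => Zᴴ * K i * R :=
    ⟨_, rfl⟩
  have hCH : ∀ i, (C i)ᴴ = R * ((K i)ᴴ * Z) := by
    intro i
    simp [hCdef, conjTranspose_mul, hRH.eq, Matrix.mul_assoc]
  obtain ⟨D, hDdef⟩ : ∃ Y : Matrix (Fin d₁) (Fin d₁) ℂ, Y = ∑ i, (C i)ᴴ * K i := ⟨_, rfl⟩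
  have hDW : D = R * W := by
    rw [hDdef, hWdef, Finset.mul_sum]
    refine Finset.sum_congr rfl fun i _ => ?_
    rw [hCH i]
    simp only [Matrix.mul_assoc]
  have hDH : Dᴴ = ∑ i, (K i)ᴴ * C i := by
    rw [hDdef]
    simp [conjTranspose_sum, conjTranspose_mul]
  obtain ⟨E, hEdef⟩ : ∃ Y : Fin k → Matrix (Fin d₂) (Fin d₁) ℂ, Y = fun i => C i - K i * Dᴴ :=
    ⟨_, rfl⟩
  have h1 : ∑ i, (C i)ᴴ * (K i * Dᴴ) = D * Dᴴ := by
    calc ∑ i, (C i)ᴴ * (K i * Dᴴ) = ∑ i, ((C i)ᴴ * K i) * Dᴴ := by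
          simp only [Matrix.mul_assoc]
      _ = D * Dᴴ := by rw [← Finset.sum_mul, ← hDdef]
  have h2 : ∑ i, (D * (K i)ᴴ) * C i = D * Dᴴ := by
    calc ∑ i, (D * (K i)ᴴ) * C i = ∑ i, D * ((K i)ᴴ * C i) := by
          simp only [Matrix.mul_assoc]
      _ = D * Dᴴ := by rw [← Finset.mul_sum, ← hDH]
  have h3 : ∑ i, (D * (K i)ᴴ) * (K i * Dᴴ) = D * Dᴴ := by
    calc ∑ i, (D * (K i)ᴴ) * (K i * Dᴴ) = D * (∑ i, (K i)ᴴ * K i) * Dᴴ := by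
          rw [Finset.mul_sum, Finset.sum_mul]
          simp only [Matrix.mul_assoc]
      _ = D * Dᴴ := by rw [hK1, mul_one]
  have expand : ∀ i, (E i)ᴴ * E i
      = (C i)ᴴ * C i - (C i)ᴴ * (K i * Dᴴ) - (D * (K i)ᴴ) * C i
        + (D * (K i)ᴴ) * (K i * Dᴴ) := by
    intro i
    simp only [hEdef, conjTranspose_sub, conjTranspose_mul, conjTranspose_conjTranspose]
    rw [Matrix.sub_mul, Matrix.mul_sub, Matrix.mul_sub]
    abel
  have key : ∑ i, (E i)ᴴ * E i = (∑ i, (C i)ᴴ * C i) - D * Dᴴ := by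
    calc ∑ i, (E i)ᴴ * E i
        = ∑ i, ((C i)ᴴ * C i - (C i)ᴴ * (K i * Dᴴ) - (D * (K i)ᴴ) * C i
          + (D * (K i)ᴴ) * (K i * Dᴴ)) := Finset.sum_congr rfl fun i _ => expand i
      _ = (∑ i, (C i)ᴴ * C i) - (∑ i, (C i)ᴴ * (K i * Dᴴ)) - (∑ i, (D * (K i)ᴴ) * C i)
          + (∑ i, (D * (K i)ᴴ) * (K i * Dᴴ)) := by
          rw [Finset.sum_add_distrib, Finset.sum_sub_distrib, Finset.sum_sub_distrib]
      _ = (∑ i, (C i)ᴴ * C i) - D * Dᴴ := by rw [h1, h2, h3]; abel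
  have hCtr : Matrix.trace (Zᴴ * σ * Z) = ∑ i, Matrix.trace ((C i)ᴴ * C i) := by
    have hmat : Zᴴ * σ * Z = ∑ i, C i * (C i)ᴴ := by
      rw [hσdef, Finset.mul_sum, Finset.sum_mul]
      refine Finset.sum_congr rfl fun i _ => ?_
      rw [hCH i, hCdef]
      rw [← hRR]
      simp only [Matrix.mul_assoc]
    rw [hmat, trace_sum]
    exact Finset.sum_congr rfl fun i _ => Matrix.trace_mul_comm _ _
  have hDtr : Matrix.trace (Wᴴ * ρ * W) = Matrix.trace (D * Dᴴ) := by
    have hmat : Dᴴ * D = Wᴴ * ρ * W := by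
      rw [hDW, conjTranspose_mul, hRH.eq, ← hRR]
      simp only [Matrix.mul_assoc]
    rw [← hmat, Matrix.trace_mul_comm]
  have schwarz : (Matrix.trace (Wᴴ * ρ * W)).re ≤ (Matrix.trace (Zᴴ * σ * Z)).re := by
    have hps : (∑ i, (E i)ᴴ * E i).PosSemidef :=
      Finset.sum_induction _ _ (fun a b ha hb => ha.add hb) Matrix.PosSemidef.zero
        (fun i _ => Matrix.posSemidef_conjTranspose_mul_self _)
    have h0 : 0 ≤ (Matrix.trace (∑ i, (E i)ᴴ * E i)).re := AuxRLD.trace_re_nonneg hps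
    rw [key, Matrix.trace_sub, trace_sum, Complex.sub_re] at h0
    rw [hCtr, hDtr]
    linarith
  -- final step
  obtain ⟨G, hGdef⟩ : ∃ Y : Matrix (Fin d₁) (Fin d₁) ℂ, Y = Q * X - W := ⟨_, rfl⟩
  have hGH : Gᴴ = X * Q - Wᴴ := by
    rw [hGdef]
    simp [conjTranspose_sub, conjTranspose_mul, hQH.eq, hX.eq]
  have hexp : Gᴴ * ρ * G = X * Q * X - X * W - Wᴴ * X + Wᴴ * ρ * W := by
    rw [hGH, hGdef]
    have expand2 : (X * Q - Wᴴ) * ρ * (Q * X - W)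
        = X * (Q * ρ) * (Q * X) - X * (Q * ρ) * W - Wᴴ * (ρ * Q) * X + Wᴴ * ρ * W := by
      noncomm_ring
    rw [expand2, hQρ, hρQ]
    noncomm_ring
  have hpos2 : 0 ≤ (Matrix.trace (Gᴴ * ρ * G)).re :=
    AuxRLD.trace_re_nonneg (hρps.conjTranspose_mul_mul_same G)
  have hXW : (Matrix.trace (X * W)).re = (Matrix.trace (Wᴴ * X)).re := by
    have h : Matrix.trace (Wᴴ * X) = star (Matrix.trace (X * W)) := by
      rw [← Matrix.trace_conjTranspose, conjTranspose_mul, hX.eq]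
    rw [h]
    simp
  rw [hexp, Matrix.trace_add, Matrix.trace_sub, Matrix.trace_sub,
    Complex.add_re, Complex.sub_re, Complex.sub_re] at hpos2
  -- assemble
  show (Matrix.trace (A * mpinv σ * A)).re ≤ (Matrix.trace (X * mpinv ρ * X)).re
  rw [← hPdef, ← hQdef]
  have eq1 : (Matrix.trace (A * P * A)).re = (Matrix.trace (Wᴴ * X)).re := by rw [e1, e3]
  have eq2 : (Matrix.trace (Zᴴ * σ * Z)).re = (Matrix.trace (Wᴴ * X)).re := by rw [e2, e3]
  linarith
end

section
/- Let $g$ assign to each smooth one-parameter family of states (classical or quantum) a nonnegative number (a metric on tangent vectors, not necessarily Riemannian) such that $g$ coincides with the classical Fisher information on families of probability distributions and is monotone non-increasing under classical-to-quantum channels. Then $g_{\rho_\theta}(\dot\rho_\theta, \dot\rho_\theta) \leq J^R_{\rho_\theta}(\dot\rho_\theta, \dot\rho_\theta)$ for every smooth family of strictly positive density operators. -/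
open Matrix BigOperators Filter
open scoped ComplexOrder

section Helpers

open Matrix
open scoped ComplexOrder

set_option linter.unusedSectionVars false

variable {n : Type} [Fintype n] [DecidableEq n]

lemma outer_apply (u : n → ℂ) (i j : n) : outer u i j = u i * star (u j) := rfl

lemma outer_mulVecMat (A : Matrix n n ℂ) (u : n → ℂ) :
    outer (A *ᵥ u) = A * outer u * Aᴴ := by
  ext i j
  simp only [outer_apply, mulVec, dotProduct, mul_apply, conjTranspose_apply]
  rw [star_sum, Finset.sum_mul_sum, Finset.sum_comm]
  refine Finset.sum_congr rfl fun l _ => ?_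
  rw [Finset.sum_mul]
  refine Finset.sum_congr rfl fun k _ => ?_
  simp only [star_mul']
  ring

lemma sum_smul_outerCol (U : Matrix n n ℂ) (c : n → ℂ) :
    ∑ x, c x • outer (fun i => U i x) = U * Matrix.diagonal c * Uᴴ := by
  ext i j
  rw [Matrix.mul_apply]
  simp only [Matrix.mul_diagonal, conjTranspose_apply, Matrix.sum_apply, Matrix.smul_apply,
    outer_apply, smul_eq_mul]
  exact Finset.sum_congr rfl fun x _ => by ring

lemma trace_outer_mul (u : n → ℂ) (B : Matrix n n ℂ) :
    Matrix.trace (outer u * B) = star u ⬝ᵥ (B *ᵥ u) := by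
  simp only [Matrix.trace, diag_apply, mul_apply, outer_apply, dotProduct, mulVec,
    Pi.star_apply]
  rw [Finset.sum_comm]
  refine Finset.sum_congr rfl fun j _ => ?_
  rw [Finset.mul_sum]
  refine Finset.sum_congr rfl fun i _ => ?_
  ring

lemma conj_diag_mul (U : Matrix n n ℂ) (hU : star U * U = 1) (a b : n → ℂ) :
    (U * Matrix.diagonal a * star U) * (U * Matrix.diagonal b * star U)
      = U * Matrix.diagonal (a * b) * star U := by
  have h : (U * Matrix.diagonal a * star U) * (U * Matrix.diagonal b * star U)
      = U * (Matrix.diagonal a * (star U * U) * Matrix.diagonal b) * star U := by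
    simp only [mul_assoc]
  rw [h, hU, mul_one, diagonal_mul_diagonal]
  rfl

lemma trace_diagonal_mul' (c : n → ℂ) (B : Matrix n n ℂ) :
    Matrix.trace (Matrix.diagonal c * B) = ∑ x, c x * B x x := by
  simp [Matrix.trace, Matrix.diagonal_mul]

lemma outer_posSemidef (u : n → ℂ) : (outer u).PosSemidef := by
  refine Matrix.PosSemidef.of_dotProduct_mulVec_nonneg ?_ ?_
  · ext i j
    simp [outer_apply, conjTranspose_apply, mul_comm]
  · intro y
    have h1 : star y ⬝ᵥ (outer u *ᵥ y) = (star u ⬝ᵥ y) * star (star u ⬝ᵥ y) := by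
      simp only [dotProduct, mulVec, outer_apply, Pi.star_apply, star_sum, star_mul',
        star_star]
      rw [Finset.sum_mul_sum]
      simp only [Finset.mul_sum]
      rw [Finset.sum_comm]
      exact Finset.sum_congr rfl fun i _ => Finset.sum_congr rfl fun j _ => by ring
    rw [h1]
    exact mul_star_self_nonneg _

lemma conj_diag_entry (U B : Matrix n n ℂ) (x : n) :
    (star U * B * U) x x = star (fun i => U i x) ⬝ᵥ (B *ᵥ fun i => U i x) := by
  simp only [mul_apply, dotProduct, mulVec, Matrix.star_apply, Pi.star_apply]
  simp only [Finset.sum_mul, Finset.mul_sum]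
  rw [Finset.sum_comm]
  exact Finset.sum_congr rfl fun i _ => Finset.sum_congr rfl fun j _ => by ring

end Helpers

/-- a (not necessarily Riemannian) metric `g` agreeing with classical
Fisher information on probability distributions and monotone under classical-to-quantum
channels is bounded above by the RLD Fisher information. -/
theorem stmt_13
    (g : (d : ℕ) → Matrix (Fin d) (Fin d) ℂ → Matrix (Fin d) (Fin d) ℂ → ℝ)
    (hnorm : ∀ (m : ℕ) (p dp : Fin m → ℝ), IsProb p → (∀ x, 0 < p x) → (∑ x, dp x = 0) →
      g m (Matrix.diagonal (fun x => (p x : ℂ))) (Matrix.diagonal (fun x => (dp x : ℂ)))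
        = ∑ x, (dp x) ^ 2 / p x)
    (hmono : ∀ (m d : ℕ) (Φ : Fin m → Matrix (Fin d) (Fin d) ℂ), (∀ x, IsDensity (Φ x)) →
      ∀ (p dp : Fin m → ℝ), IsProb p → (∑ x, dp x = 0) →
        g d (∑ x, (p x : ℂ) • Φ x) (∑ x, (dp x : ℂ) • Φ x) ≤
          g m (Matrix.diagonal (fun x => (p x : ℂ))) (Matrix.diagonal (fun x => (dp x : ℂ))))
    {d : ℕ} (ρ X : Matrix (Fin d) (Fin d) ℂ)
    (hρ : IsDensity ρ) (hpd : ρ.PosDef) (hX : X.IsHermitian) (hXtr : X.trace = 0) :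
    g d ρ X ≤ JR ρ X := by
  classical
  obtain ⟨hρpsd, hρtr⟩ := hρ
  have hρh : ρ.IsHermitian := hpd.1
  -- square root of ρ
  set S : Matrix (Fin d) (Fin d) ℂ := msqrt ρ with hSdef
  have hS_eq : S = hρh.cfc Real.sqrt := by
    rw [hSdef, msqrt, matFun, dif_pos hρh]
  have hS2 : S * S = ρ := by
    rw [hS_eq, Matrix.IsHermitian.cfc, Unitary.conjStarAlgAut_apply,
      conj_diag_mul _ (Unitary.coe_star_mul_self _)]
    conv_rhs => rw [hρh.spectral_theorem, Unitary.conjStarAlgAut_apply]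
    congr 3
    funext i
    simp only [Pi.mul_apply, Function.comp_apply, ← RCLike.ofReal_mul,
      Real.mul_self_sqrt (hρpsd.eigenvalues_nonneg i)]
  have hSh : S.IsHermitian := by
    rw [hS_eq, ← hρh.cfc_eq Real.sqrt]
    exact Matrix.isHermitian_iff_isSelfAdjoint.mpr (cfc_predicate _ _)
  -- invertibility
  have hρdet : IsUnit ρ.det := by
    rw [hρh.det_eq_prod_eigenvalues]
    refine isUnit_iff_ne_zero.mpr (Finset.prod_ne_zero_iff.mpr fun i _ => ?_)
    exact Complex.ofReal_ne_zero.mpr (hpd.eigenvalues_pos i).ne'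
  have hSdet : IsUnit S.det := by
    have h := congrArg Matrix.det hS2
    rw [Matrix.det_mul] at h
    exact isUnit_of_mul_isUnit_left (h ▸ hρdet)
  have hSS' : S * S⁻¹ = 1 := Matrix.mul_nonsing_inv _ hSdet
  have hS'S : S⁻¹ * S = 1 := Matrix.nonsing_inv_mul _ hSdet
  -- mpinv ρ = S⁻¹ * S⁻¹
  have hρinv : ρ * (S⁻¹ * S⁻¹) = 1 := by
    rw [← hS2]
    have h : S * S * (S⁻¹ * S⁻¹) = S * ((S * S⁻¹) * S⁻¹) := by simp only [mul_assoc]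
    rw [h, hSS', one_mul, hSS']
  have hρP : ρ * mpinv ρ = 1 := by
    have hmp' : mpinv ρ = (Matrix.IsHermitian.eigenvectorUnitary hρh : Matrix (Fin d) (Fin d) ℂ)
        * Matrix.diagonal (RCLike.ofReal ∘ (fun t : ℝ => if t = 0 then 0 else t⁻¹) ∘ hρh.eigenvalues)
        * star (Matrix.IsHermitian.eigenvectorUnitary hρh : Matrix (Fin d) (Fin d) ℂ) := by
      rw [mpinv, matFun, dif_pos hρh, Matrix.IsHermitian.cfc]
      rfl
    have hVρ : star (Matrix.IsHermitian.eigenvectorUnitary hρh : Matrix (Fin d) (Fin d) ℂ)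
        * (Matrix.IsHermitian.eigenvectorUnitary hρh : Matrix (Fin d) (Fin d) ℂ) = 1 :=
      Unitary.coe_star_mul_self _
    have key : ρ * mpinv ρ
        = ((Matrix.IsHermitian.eigenvectorUnitary hρh : Matrix (Fin d) (Fin d) ℂ)
            * Matrix.diagonal (RCLike.ofReal ∘ hρh.eigenvalues)
            * star (Matrix.IsHermitian.eigenvectorUnitary hρh : Matrix (Fin d) (Fin d) ℂ))
          * ((Matrix.IsHermitian.eigenvectorUnitary hρh : Matrix (Fin d) (Fin d) ℂ)
            * Matrix.diagonal (RCLike.ofReal ∘ (fun t : ℝ => if t = 0 then 0 else t⁻¹)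
                ∘ hρh.eigenvalues)
            * star (Matrix.IsHermitian.eigenvectorUnitary hρh : Matrix (Fin d) (Fin d) ℂ)) := by
      rw [hmp']
      congr 1
      exact hρh.spectral_theorem
    rw [key, conj_diag_mul _ hVρ]
    have hd1 : (1 : Fin d → ℂ) = fun _ => 1 := rfl
    have hdiag1 : (RCLike.ofReal ∘ hρh.eigenvalues : Fin d → ℂ) *
        (RCLike.ofReal ∘ (fun t : ℝ => if t = 0 then 0 else t⁻¹) ∘ hρh.eigenvalues) = 1 := by
      funext x
      have hx : hρh.eigenvalues x ≠ 0 := ne_of_gt (hpd.eigenvalues_pos x)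
      simp only [Pi.mul_apply, Function.comp_apply, if_neg hx, Pi.one_apply,
        RCLike.ofReal_inv]
      exact mul_inv_cancel₀ (RCLike.ofReal_ne_zero.mpr hx)
    rw [hdiag1, hd1, Matrix.diagonal_one, mul_one]
    exact Unitary.coe_mul_star_self _
  have hmp : mpinv ρ = S⁻¹ * S⁻¹ := by
    rw [← Matrix.inv_eq_right_inv hρP, Matrix.inv_eq_right_inv hρinv]
  -- the operator M = S⁻¹ X S⁻¹
  set M : Matrix (Fin d) (Fin d) ℂ := S⁻¹ * X * S⁻¹ with hMdef
  have hS'h : (S⁻¹).IsHermitian := by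
    show (S⁻¹)ᴴ = S⁻¹
    rw [Matrix.conjTranspose_nonsing_inv, hSh.eq]
  have hMh : M.IsHermitian := by
    show Mᴴ = M
    rw [hMdef, Matrix.conjTranspose_mul, Matrix.conjTranspose_mul, hS'h.eq, hX.eq]
    simp only [mul_assoc]
  have hX_eq : X = S * M * S := by
    rw [hMdef]
    have h : S * (S⁻¹ * X * S⁻¹) * S = (S * S⁻¹) * (X * (S⁻¹ * S)) := by
      simp only [mul_assoc]
    rw [h, hSS', hS'S, one_mul, mul_one]
  -- spectral decomposition of M
  set U : Matrix (Fin d) (Fin d) ℂ :=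
    (Matrix.IsHermitian.eigenvectorUnitary hMh : Matrix (Fin d) (Fin d) ℂ) with hUdef
  set lam : Fin d → ℝ := hMh.eigenvalues with hlamdef
  have hU1 : star U * U = 1 := Unitary.coe_star_mul_self _
  have hU2 : U * star U = 1 := Unitary.coe_mul_star_self _
  have hMspec : M = U * Matrix.diagonal (fun x => (lam x : ℂ)) * star U := by
    have h := hMh.spectral_theorem
    rw [Unitary.conjStarAlgAut_apply] at h
    exact h
  -- the weights
  set Q : Matrix (Fin d) (Fin d) ℂ := star U * ρ * U with hQdef
  have hQdiag : ∀ x, Q x x = star (fun i => U i x) ⬝ᵥ (ρ *ᵥ fun i => U i x) := fun x =>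
    conj_diag_entry U ρ x
  have hcol_ne : ∀ x, (fun i => U i x) ≠ 0 := by
    intro x h
    have h1 : (star U * U) x x = 1 := by rw [hU1]; simp
    rw [Matrix.mul_apply] at h1
    have h2 : ∀ j, U j x = 0 := fun j => congrFun h j
    simp only [Matrix.star_apply, h2, star_zero, mul_zero, Finset.sum_const_zero] at h1
    exact zero_ne_one h1
  have hQpos : ∀ x, 0 < Q x x := fun x => by rw [hQdiag x]; exact hpd.dotProduct_mulVec_pos (hcol_ne x)
  set p : Fin d → ℝ := fun x => (Q x x).re with hpdef
  have hppos : ∀ x, 0 < p x := by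
    intro x
    have h := hQpos x
    rw [Complex.lt_def] at h
    simpa using h.1
  have hpne : ∀ x, (p x : ℂ) ≠ 0 := fun x => by
    exact_mod_cast ne_of_gt (hppos x)
  have hQreal : ∀ x, Q x x = (p x : ℂ) := by
    intro x
    have h := hQpos x
    rw [Complex.lt_def] at h
    apply Complex.ext
    · simp [hpdef]
    · simpa using h.2.symm
  set dp : Fin d → ℝ := fun x => lam x * p x with hdpdef
  -- the ensemble
  set Φ : Fin d → Matrix (Fin d) (Fin d) ℂ :=
    fun x => ((p x : ℂ))⁻¹ • outer (S *ᵥ fun i => U i x) with hΦdef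
  have houter : ∀ x, outer (S *ᵥ fun i => U i x) = S * outer (fun i => U i x) * S := by
    intro x; rw [outer_mulVecMat, hSh.eq]
  have htrouter : ∀ x, (outer (S *ᵥ fun i => U i x)).trace = Q x x := by
    intro x
    rw [houter x, Matrix.trace_mul_cycle, hS2, Matrix.trace_mul_comm, trace_outer_mul,
      hQdiag x]
  have hΦtr : ∀ x, (Φ x).trace = 1 := by
    intro x
    rw [hΦdef]
    simp only [Matrix.trace_smul, htrouter x, hQreal x, smul_eq_mul]
    exact inv_mul_cancel₀ (hpne x)
  have hΦpsd : ∀ x, (Φ x).PosSemidef := by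
    intro x
    rw [hΦdef]
    have hinv : (0:ℝ) ≤ (p x)⁻¹ := inv_nonneg.mpr (hppos x).le
    refine Matrix.PosSemidef.of_dotProduct_mulVec_nonneg ?_ ?_
    · show (((p x : ℂ))⁻¹ • outer (S *ᵥ fun i => U i x))ᴴ = _
      rw [Matrix.conjTranspose_smul, (outer_posSemidef _).1.eq]
      congr 1
      simp [← Complex.ofReal_inv]
    · intro y
      rw [Matrix.smul_mulVec, dotProduct_smul]
      have := (outer_posSemidef (S *ᵥ fun i => U i x)).dotProduct_mulVec_nonneg y
      rw [← Complex.ofReal_inv]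
      exact smul_nonneg (by exact_mod_cast hinv) this
  have hΦdens : ∀ x, IsDensity (Φ x) := fun x => ⟨hΦpsd x, hΦtr x⟩
  -- key sum identities
  have hsmul1 : ∀ x, (p x : ℂ) • Φ x = outer (S *ᵥ fun i => U i x) := by
    intro x
    rw [hΦdef, smul_smul, mul_inv_cancel₀ (hpne x), one_smul]
  have hsum1 : ∑ x, (p x : ℂ) • Φ x = ρ := by
    rw [Finset.sum_congr rfl fun x _ => hsmul1 x]
    rw [Finset.sum_congr rfl fun x _ => houter x]
    have h : ∑ x, S * outer (fun i => U i x) * S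
        = S * (∑ x, (1:ℂ) • outer (fun i => U i x)) * S := by
      simp only [one_smul, Finset.mul_sum, Finset.sum_mul]
    rw [h, sum_smul_outerCol, Matrix.diagonal_one, mul_one, ← Matrix.star_eq_conjTranspose,
      hU2, mul_one, hS2]
  have hsmul2 : ∀ x, (dp x : ℂ) • Φ x = (lam x : ℂ) • (S * outer (fun i => U i x) * S) := by
    intro x
    rw [hΦdef, smul_smul, ← houter x]
    congr 1
    rw [hdpdef]
    push_cast
    rw [mul_assoc, mul_inv_cancel₀ (hpne x), mul_one]
  have hsum2 : ∑ x, (dp x : ℂ) • Φ x = X := by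
    rw [Finset.sum_congr rfl fun x _ => hsmul2 x]
    have h : ∑ x, (lam x : ℂ) • (S * outer (fun i => U i x) * S)
        = S * (∑ x, (lam x : ℂ) • outer (fun i => U i x)) * S := by
      simp only [Finset.mul_sum, Finset.sum_mul, Matrix.mul_smul, Matrix.smul_mul]
    rw [h, sum_smul_outerCol, ← Matrix.star_eq_conjTranspose, ← hMspec, ← hX_eq]
  -- p is a probability vector
  have hQtr : ∑ x, Q x x = ρ.trace := by
    have h1 : ∑ x, Q x x = Q.trace := rfl
    rw [h1, hQdef, Matrix.trace_mul_cycle, hU2, one_mul]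
  have hpsum : ∑ x, p x = 1 := by
    have h : (↑(∑ x, p x) : ℂ) = 1 := by
      push_cast
      rw [Finset.sum_congr rfl fun x _ => (hQreal x).symm, hQtr, hρtr]
    exact_mod_cast h
  have hprob : IsProb p := ⟨fun x => (hppos x).le, hpsum⟩
  -- dp sums to zero
  have hDQ : ∀ c : Fin d → ℂ, Matrix.trace (U * Matrix.diagonal c * star U * ρ)
      = ∑ x, c x * Q x x := by
    intro c
    rw [← trace_diagonal_mul' c Q, hQdef]
    have h1 : U * Matrix.diagonal c * star U * ρ = U * (Matrix.diagonal c * star U * ρ) := by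
      simp only [mul_assoc]
    rw [h1, Matrix.trace_mul_comm]
    congr 1
    simp only [mul_assoc]
  have hMρtr : Matrix.trace (M * ρ) = X.trace := by
    have h : M * ρ = S⁻¹ * X * S := by
      rw [hMdef, ← hS2]
      have h2 : S⁻¹ * X * S⁻¹ * (S * S) = S⁻¹ * X * ((S⁻¹ * S) * S) := by
        simp only [mul_assoc]
      rw [h2, hS'S, one_mul]
    rw [h, Matrix.trace_mul_cycle, hSS', one_mul]
  have hdpsum : ∑ x, dp x = 0 := by
    have h1 : ∑ x, (lam x : ℂ) * Q x x = X.trace := by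
      rw [← hDQ, ← hMspec, hMρtr]
    have h2 : ∑ x, ((dp x : ℝ) : ℂ) = 0 := by
      have hterm : ∀ x, ((dp x : ℝ) : ℂ) = (lam x : ℂ) * Q x x := by
        intro x
        rw [hQreal x]
        simp only [hdpdef]
        push_cast
        ring
      rw [Finset.sum_congr rfl fun x _ => hterm x, h1, hXtr]
    exact_mod_cast h2
  -- the Fisher information value
  have hMM : M * M = U * Matrix.diagonal ((fun x => (lam x : ℂ)) * (fun x => (lam x : ℂ)))
      * star U := by
    rw [hMspec, conj_diag_mul U hU1]
  have hXX : X * mpinv ρ * X = S * (M * M) * S := by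
    rw [hmp, hX_eq]
    have h : S * M * S * (S⁻¹ * S⁻¹) * (S * M * S)
        = S * (M * ((S * S⁻¹) * (S⁻¹ * S)) * M) * S := by
      simp only [mul_assoc]
    rw [h, hSS', hS'S, one_mul, mul_one]
  have hJtr : Matrix.trace (X * mpinv ρ * X) = ∑ x, ((lam x : ℂ) * (lam x : ℂ)) * Q x x := by
    rw [hXX, hMM, Matrix.trace_mul_cycle, hS2, Matrix.trace_mul_comm, hDQ]
    rfl
  have hJR : JR ρ X = ∑ x, dp x ^ 2 / p x := by
    have hterm : ∀ x, dp x ^ 2 / p x = lam x ^ 2 * p x := by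
      intro x
      have hpx : p x ≠ 0 := (hppos x).ne'
      simp only [hdpdef]
      field_simp
    unfold JR
    rw [hJtr, Complex.re_sum]
    rw [Finset.sum_congr rfl fun x _ => hterm x]
    refine Finset.sum_congr rfl fun x _ => ?_
    rw [hQreal x, ← Complex.ofReal_mul, ← Complex.ofReal_mul, Complex.ofReal_re]
    ring
  -- final chain
  have hmain := hmono d d Φ hΦdens p dp hprob hdpsum
  rw [hsum1, hsum2, hnorm d p dp hprob hppos hdpsum] at hmain
  rw [hJR]
  exact hmain
end

section
/- Let $g$ assign to each smooth family of states a metric value such that $g$ coincides with classical Fisher information on probability distributions and is monotone non-increasing under measurements (quantum-to-classical channels). Then $g_{\rho_\theta}(\dot\rho_\theta,\dot\rho_\theta) \geq J^S_{\rho_\theta}(\dot\rho_\theta,\dot\rho_\theta)$, where $J^S$ is the SLD Fisher information. -/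
open Matrix BigOperators Filter
open scoped ComplexOrder

/-- a metric `g` agreeing with classical Fisher information on probability
distributions and monotone under measurements is bounded below by the SLD Fisher
information (expressed via the symmetric logarithmic derivative `L`). -/
theorem stmt_14
    (g : (d : ℕ) → Matrix (Fin d) (Fin d) ℂ → Matrix (Fin d) (Fin d) ℂ → ℝ)
    (hnorm : ∀ (m : ℕ) (p dp : Fin m → ℝ), IsProb p → (∀ x, 0 < p x) → (∑ x, dp x = 0) →
      g m (Matrix.diagonal (fun x => (p x : ℂ))) (Matrix.diagonal (fun x => (dp x : ℂ)))
        = ∑ x, (dp x) ^ 2 / p x)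
    (hmono : ∀ (d m : ℕ) (M : Fin m → Matrix (Fin d) (Fin d) ℂ),
      (∀ x, (M x).PosSemidef) → (∑ x, M x = 1) →
      ∀ (ρ X : Matrix (Fin d) (Fin d) ℂ), IsDensity ρ → X.IsHermitian → X.trace = 0 →
        g m (Matrix.diagonal (fun x => ((Matrix.trace (M x * ρ)).re : ℂ)))
            (Matrix.diagonal (fun x => ((Matrix.trace (M x * X)).re : ℂ))) ≤ g d ρ X)
    {d : ℕ} (ρ X : Matrix (Fin d) (Fin d) ℂ)
    (hρ : IsDensity ρ) (hpd : ρ.PosDef) (hX : X.IsHermitian) (hXtr : X.trace = 0)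
    (L : Matrix (Fin d) (Fin d) ℂ) (hL : L.IsHermitian)
    (hSLD : X = ((1 : ℂ)/2) • (L * ρ + ρ * L)) :
    (Matrix.trace (ρ * L * L)).re ≤ g d ρ X := by
  classical
  set U : Matrix (Fin d) (Fin d) ℂ := (hL.eigenvectorUnitary : Matrix (Fin d) (Fin d) ℂ) with hUdef
  have hUU : U * star U = 1 := (Matrix.mem_unitaryGroup_iff).mp hL.eigenvectorUnitary.2
  have hUU' : star U * U = 1 := (Matrix.mem_unitaryGroup_iff').mp hL.eigenvectorUnitary.2
  set Dc : Matrix (Fin d) (Fin d) ℂ := Matrix.diagonal (fun x => (hL.eigenvalues x : ℂ)) with hDcdef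
  have hDc : star U * L * U = Dc := by
    have h := hL.conjStarAlgAut_star_eigenvectorUnitary; simp at h; exact h
  set A : Matrix (Fin d) (Fin d) ℂ := star U * ρ * U with hAdef
  set M : Fin d → Matrix (Fin d) (Fin d) ℂ := fun x => Matrix.of fun i j => U i x * star (U j x) with hM
  have hMpos : ∀ x, (M x).PosSemidef := by
    intro x
    have : M x = (Matrix.of fun (_ : Fin 1) j => star (U j x))ᴴ
        * (Matrix.of fun (_ : Fin 1) j => star (U j x)) := by
      ext i j
      simp [hM, Matrix.mul_apply, Matrix.conjTranspose_apply, mul_comm]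
    rw [this]
    exact Matrix.posSemidef_conjTranspose_mul_self _
  have hsum : ∑ x, M x = 1 := by
    ext i j
    simpa [Matrix.sum_apply, hM, Matrix.mul_apply, Matrix.star_eq_conjTranspose,
      Matrix.conjTranspose_apply] using congrFun (congrFun hUU i) j
  have htr : ∀ (x : Fin d) (B : Matrix (Fin d) (Fin d) ℂ),
      Matrix.trace (M x * B) = (star U * B * U) x x := by
    intro x B
    simp only [Matrix.trace, Matrix.diag, Matrix.mul_apply, hM, Matrix.of_apply,
      Matrix.star_eq_conjTranspose, Matrix.conjTranspose_apply, Finset.sum_mul]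
    exact Finset.sum_congr rfl fun i _ => Finset.sum_congr rfl fun j _ => by ring
  have htrconj : ∀ B : Matrix (Fin d) (Fin d) ℂ,
      Matrix.trace (star U * B * U) = Matrix.trace B := by
    intro B
    rw [Matrix.trace_mul_cycle, hUU, Matrix.one_mul]
  -- positivity of the diagonal of A
  have hcol : ∀ x, (fun j => U j x) ≠ 0 := by
    intro x hx
    have h1 := congrFun (congrFun hUU' x) x
    simp only [Matrix.mul_apply, Matrix.one_apply_eq, Matrix.star_eq_conjTranspose,
      Matrix.conjTranspose_apply] at h1
    have : ∀ j, U j x = 0 := fun j => congrFun hx j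
    simp [this] at h1
  have hdiag : ∀ x, A x x = star (fun j => U j x) ⬝ᵥ (ρ *ᵥ fun j => U j x) := by
    intro x
    simp only [hAdef, Matrix.mul_apply, Matrix.mulVec, dotProduct, Pi.star_apply,
      Matrix.star_eq_conjTranspose, Matrix.conjTranspose_apply, Finset.sum_mul, Finset.mul_sum]
    rw [Finset.sum_comm]
    exact Finset.sum_congr rfl fun i _ => Finset.sum_congr rfl fun j _ => by ring
  have hpos : ∀ x, 0 < (A x x).re := by
    intro x
    rw [hdiag]
    exact hpd.re_dotProduct_pos (hcol x)
  have hAH : A.IsHermitian := by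
    rw [hAdef, Matrix.star_eq_conjTranspose]
    exact Matrix.isHermitian_conjTranspose_mul_mul U hpd.isHermitian
  have hAre : ∀ x, A x x = ((A x x).re : ℂ) := fun x => (hAH.coe_re_apply_self x).symm
  -- conjugation of X
  have e1 : star U * (L * ρ) * U = Dc * A := by
    rw [← hDc, hAdef]
    simp only [Matrix.mul_assoc]
    rw [← Matrix.mul_assoc U (star U), hUU, Matrix.one_mul]
  have e2 : star U * (ρ * L) * U = A * Dc := by
    rw [← hDc, hAdef]
    simp only [Matrix.mul_assoc]
    rw [← Matrix.mul_assoc U (star U), hUU, Matrix.one_mul]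
  have hXU : star U * X * U = ((1:ℂ)/2) • (Dc * A + A * Dc) := by
    rw [hSLD, Matrix.mul_smul, Matrix.smul_mul, Matrix.mul_add, Matrix.add_mul, e1, e2]
  have hXdiag : ∀ x, (star U * X * U) x x = (hL.eigenvalues x : ℂ) * A x x := by
    intro x
    rw [hXU]
    simp only [Matrix.smul_apply, Matrix.add_apply, Matrix.diagonal_mul, Matrix.mul_diagonal,
      hDcdef, smul_eq_mul]
    ring
  -- trace of rho L L
  have hconjLL : star U * (ρ * L * L) * U = A * Dc * Dc := by
    rw [← hDc, hAdef]
    simp only [Matrix.mul_assoc]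
    rw [← Matrix.mul_assoc U (star U), hUU, Matrix.one_mul,
      ← Matrix.mul_assoc U (star U), hUU, Matrix.one_mul]
  have htrLL : Matrix.trace (ρ * L * L) = ∑ x, A x x * (hL.eigenvalues x : ℂ) ^ 2 := by
    rw [← htrconj (ρ * L * L), hconjLL]
    rw [Matrix.mul_assoc, hDcdef, Matrix.diagonal_mul_diagonal]
    simp only [Matrix.trace, Matrix.diag, Matrix.mul_diagonal]
    exact Finset.sum_congr rfl fun x _ => by ring
  -- set up classical quantities
  set p : Fin d → ℝ := fun x => (A x x).re with hp
  set dp : Fin d → ℝ := fun x => hL.eigenvalues x * p x with hdp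
  have hprob : IsProb p := by
    constructor
    · exact fun x => (hpos x).le
    · have : Matrix.trace A = 1 := by
        rw [hAdef, htrconj, hρ.2]
      have h2 := congrArg Complex.re this
      simpa [Matrix.trace, Matrix.diag, Complex.re_sum, hp] using h2
  have hdp0 : ∑ x, dp x = 0 := by
    have h1 : Matrix.trace (star U * X * U) = 0 := by rw [htrconj, hXtr]
    have h2 := congrArg Complex.re h1
    rw [Matrix.trace] at h2
    simp only [Matrix.diag, Complex.re_sum, Complex.zero_re] at h2
    rw [← h2]
    refine Finset.sum_congr rfl fun x _ => ?_
    rw [hXdiag x, hAre x]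
    simp [hdp, hp]
  -- identify diagonals
  have hmono' := hmono d d M hMpos hsum ρ X hρ hX hXtr
  have hd1 : (fun x => ((Matrix.trace (M x * ρ)).re : ℂ)) = fun x => (p x : ℂ) := by
    funext x
    rw [htr x ρ]
  have hd2 : (fun x => ((Matrix.trace (M x * X)).re : ℂ)) = fun x => (dp x : ℂ) := by
    funext x
    rw [htr x X, hXdiag x, hAre x]
    simp [hdp, hp]
  rw [hd1, hd2] at hmono'
  have hn := hnorm d p dp hprob hpos hdp0
  have hval : (Matrix.trace (ρ * L * L)).re = ∑ x, dp x ^ 2 / p x := by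
    rw [htrLL]
    rw [Complex.re_sum]
    refine Finset.sum_congr rfl fun x _ => ?_
    rw [hAre x]
    have hpx : p x ≠ 0 := (hpos x).ne'
    have h1 : ((p x : ℂ) * (hL.eigenvalues x : ℂ) ^ 2).re = p x * hL.eigenvalues x ^ 2 := by
      norm_cast
    have h2 : dp x ^ 2 / p x = p x * hL.eigenvalues x ^ 2 := by
      show (hL.eigenvalues x * p x) ^ 2 / p x = _
      field_simp
    rw [h1, h2]
  rw [hval, ← hn]
  exact hmono'
end

section
/- (Achievability of asymptotic reverse test) Let $\{\rho^n\}, \{\sigma^n\}$ be sequences of density operators with $D := \mathrm{D}^\infty_{\max}(\{\rho^n\}\|\{\sigma^n\}) < \infty$. Then for every $c > 0$ there exist binary probability distributions $p^n, q^n$ on $\{0,1\}$ and classical-to-quantum channels $\Phi^n$ such that $\|\Phi^n(p^n) - \rho^n\|_1 \to 0$, $\Phi^n(q^n) = \sigma^n$, $p^n(0) \to 1$, $q^n(1) \to 1$, and $\liminf_n \frac{-1}{n}\ln q^n(0) = D + c$. -/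
open Matrix BigOperators Filter
open scoped ComplexOrder

/-- The set of achievable exponents defining `D^∞_max({ρⁿ}‖{σⁿ})`. -/
def DmaxSet (H : ℕ → ℕ) (ρ σ : ∀ n : ℕ, Matrix (Fin (H n)) (Fin (H n)) ℂ) : Set ℝ :=
  {a | ∃ ρt : ∀ n : ℕ, Matrix (Fin (H n)) (Fin (H n)) ℂ,
    (∀ n, IsDensity (ρt n)) ∧
    (∀ n : ℕ, (((Real.exp (n * a) : ℝ) : ℂ) • σ n - ρt n).PosSemidef) ∧
    Filter.Tendsto (fun n => traceNorm (ρt n - ρ n)) Filter.atTop (nhds 0)}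

section helpers

private lemma psd_real_smul {m : Type} [Fintype m] [DecidableEq m] {M : Matrix m m ℂ}
    (h : M.PosSemidef) {r : ℝ} (hr : 0 ≤ r) : ((r:ℂ) • M).PosSemidef := by
  refine Matrix.PosSemidef.of_dotProduct_mulVec_nonneg ?_ ?_
  · simp [Matrix.IsHermitian, Matrix.conjTranspose_smul, Complex.conj_ofReal, h.1.eq]
  · intro x
    rw [smul_mulVec, dotProduct_smul, smul_eq_mul]
    exact mul_nonneg (by exact_mod_cast hr) (h.dotProduct_mulVec_nonneg x)

private lemma psd_trace_nonneg {m : Type} [Fintype m] [DecidableEq m] {M : Matrix m m ℂ}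
    (h : M.PosSemidef) : 0 ≤ M.trace := by
  rw [Matrix.trace]
  apply Finset.sum_nonneg
  intro i _
  have := h.dotProduct_mulVec_nonneg (Pi.single i 1)
  simpa [Matrix.mulVec_single, Matrix.diag, dotProduct, Pi.single_apply,
    Finset.sum_ite_eq] using this

end helpers

/-- achievability of the asymptotic reverse test: for every `c > 0` there
is an asymptotic reverse test whose rate is exactly `D^∞_max + c`. -/

theorem stmt_16 (H : ℕ → ℕ) (ρ σ : ∀ n : ℕ, Matrix (Fin (H n)) (Fin (H n)) ℂ)
    (hρ : ∀ n, IsDensity (ρ n)) (hσ : ∀ n, IsDensity (σ n))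
    (hfin : (DmaxSet H ρ σ).Nonempty) (c : ℝ) (hc : 0 < c) :
    ∃ (p q : ℕ → Fin 2 → ℝ) (Φ : ∀ n : ℕ, Fin 2 → Matrix (Fin (H n)) (Fin (H n)) ℂ),
      (∀ n, IsProb (p n)) ∧ (∀ n, IsProb (q n)) ∧ (∀ n x, IsDensity (Φ n x)) ∧
      Filter.Tendsto (fun n => traceNorm ((∑ x, (p n x : ℂ) • Φ n x) - ρ n))
        Filter.atTop (nhds 0) ∧
      (∀ n, ∑ x, (q n x : ℂ) • Φ n x = σ n) ∧
      Filter.Tendsto (fun n => p n 0) Filter.atTop (nhds 1) ∧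
      Filter.Tendsto (fun n => q n 1) Filter.atTop (nhds 1) ∧
      Filter.liminf (fun n : ℕ => (-1 / (n : ℝ)) * Real.log (q n 0)) Filter.atTop
        = sInf (DmaxSet H ρ σ) + c := by
  classical
  set S := DmaxSet H ρ σ with hSdef
  have hS0 : ∀ a ∈ S, (0:ℝ) ≤ a := by
    intro a ha
    obtain ⟨ρt, hd, hle, -⟩ := ha
    have h1 := psd_trace_nonneg (hle 1)
    rw [Matrix.trace_sub, Matrix.trace_smul, (hσ 1).2, (hd 1).2] at h1
    have h2 : (0:ℂ) ≤ (((Real.exp a - 1 : ℝ)) : ℂ) := by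
      convert h1 using 1
      push_cast
      simp [smul_eq_mul]
    rw [Complex.zero_le_real] at h2
    have : (1:ℝ) ≤ Real.exp a := by linarith
    exact Real.one_le_exp_iff.mp this
  have hD0 : (0:ℝ) ≤ sInf S := le_csInf hfin hS0
  set b : ℝ := sInf S + c with hbdef
  have hb : 0 < b := by positivity
  obtain ⟨a, haS, hab⟩ := exists_lt_of_csInf_lt hfin (by linarith : sInf S < b)
  obtain ⟨ρt, hdens, hle, htend⟩ := haS
  have ha0 : 0 ≤ a := hS0 a ⟨ρt, hdens, hle, htend⟩
  set t : ℕ → ℝ := fun n => if n = 0 then 0 else Real.exp (-(n:ℝ) * b) with htdef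
  have ht0 : ∀ n, 0 ≤ t n := by
    intro n; by_cases hn : n = 0 <;> simp [htdef, hn, (Real.exp_pos _).le]
  have ht1 : ∀ n, t n < 1 := by
    intro n
    by_cases hn : n = 0
    · simp [htdef, hn]
    · have hn1 : (1:ℝ) ≤ (n:ℝ) := by exact_mod_cast Nat.one_le_iff_ne_zero.mpr hn
      simp only [htdef, if_neg hn]
      apply Real.exp_lt_one_iff.mpr
      nlinarith
  have hne : ∀ n, (1 - t n : ℝ) ≠ 0 := fun n => by have := ht1 n; linarith
  have hkey : ∀ n, (σ n - ((t n : ℝ) : ℂ) • ρt n).PosSemidef := by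
    intro n
    by_cases hn : n = 0
    · subst hn; simpa [htdef] using (hσ 0).1
    · have hexp : (0:ℝ) ≤ Real.exp (-(n:ℝ) * b) := (Real.exp_pos _).le
      have hle1 : Real.exp (-(n:ℝ) * b) * Real.exp (n * a) ≤ 1 := by
        rw [← Real.exp_add]
        apply Real.exp_le_one_iff.mpr
        have hn1 : (1:ℝ) ≤ (n:ℝ) := by exact_mod_cast Nat.one_le_iff_ne_zero.mpr hn
        nlinarith
      have hdecomp : σ n - ((Real.exp (-(n:ℝ) * b) : ℝ) : ℂ) • ρt n =
          ((Real.exp (-(n:ℝ) * b) : ℝ) : ℂ) • (((Real.exp (n * a) : ℝ) : ℂ) • σ n - ρt n)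
          + (((1 - Real.exp (-(n:ℝ) * b) * Real.exp (n * a)) : ℝ) : ℂ) • σ n := by
        ext i j
        simp only [Matrix.sub_apply, Matrix.add_apply, Matrix.smul_apply, smul_eq_mul]
        push_cast
        ring
      simp only [htdef, if_neg hn]
      rw [hdecomp]
      exact ((psd_real_smul (hle n) hexp).add (psd_real_smul (hσ n).1 (by linarith)))
  have hphi : ∀ n, IsDensity ((((1 - t n)⁻¹ : ℝ) : ℂ) • (σ n - ((t n : ℝ) : ℂ) • ρt n)) := by
    intro n
    constructor
    · exact psd_real_smul (hkey n) (inv_nonneg.mpr (by have := ht1 n; linarith))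
    · rw [Matrix.trace_smul, Matrix.trace_sub, Matrix.trace_smul, (hσ n).2, (hdens n).2,
        smul_eq_mul, smul_eq_mul, mul_one]
      rw [show ((1:ℂ) - ((t n : ℝ) : ℂ)) = (((1 - t n : ℝ)) : ℂ) by push_cast; ring]
      rw [← Complex.ofReal_mul, inv_mul_cancel₀ (hne n), Complex.ofReal_one]
  refine ⟨fun _ => ![1, 0], fun n => ![t n, 1 - t n],
    fun n => ![ρt n, (((1 - t n)⁻¹ : ℝ) : ℂ) • (σ n - ((t n : ℝ) : ℂ) • ρt n)],
    ?_, ?_, ?_, ?_, ?_, ?_, ?_, ?_⟩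
  · intro n
    refine ⟨fun x => ?_, by simp⟩
    fin_cases x <;> norm_num
  · intro n
    refine ⟨fun x => ?_, by simp⟩
    fin_cases x <;> simp [ht0 n, (ht1 n).le]
  · intro n x
    fin_cases x
    · simpa using hdens n
    · simpa using hphi n
  · have hsum : ∀ n, (∑ x : Fin 2, ((![1, 0] : Fin 2 → ℝ) x : ℂ) •
        (![ρt n, (((1 - t n)⁻¹ : ℝ) : ℂ) • (σ n - ((t n : ℝ) : ℂ) • ρt n)] : Fin 2 → _) x)
        = ρt n := by
      intro n; simp [Fin.sum_univ_two]
    simpa only [hsum] using htend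
  · intro n
    rw [Fin.sum_univ_two]
    simp only [Matrix.cons_val_zero, Matrix.cons_val_one, Matrix.head_cons, smul_smul]
    rw [show ((1 - t n : ℝ) : ℂ) * (((1 - t n)⁻¹ : ℝ) : ℂ) = 1 by
      rw [← Complex.ofReal_mul, mul_inv_cancel₀ (hne n), Complex.ofReal_one], one_smul]
    abel
  · simpa using (tendsto_const_nhds : Tendsto (fun _ : ℕ => (1:ℝ)) atTop (nhds 1))
  · have htt : Tendsto t atTop (nhds 0) := by
      have heq : ∀ᶠ n : ℕ in atTop, (Real.exp (-b)) ^ n = t n := by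
        filter_upwards [eventually_ne_atTop 0] with n hn
        rw [htdef]
        simp only [if_neg hn]
        rw [← Real.exp_nat_mul]
        ring_nf
      have hlim : Tendsto (fun n : ℕ => (Real.exp (-b)) ^ n) atTop (nhds 0) :=
        tendsto_pow_atTop_nhds_zero_of_lt_one (Real.exp_pos _).le
          (Real.exp_lt_one_iff.mpr (by linarith))
      exact hlim.congr' heq
    have h2 : Tendsto (fun n => 1 - t n) atTop (nhds (1 - 0)) :=
      tendsto_const_nhds.sub htt
    simpa using h2
  · have heq : ∀ᶠ n : ℕ in atTop,
        (-1 / (n : ℝ)) * Real.log ((![t n, 1 - t n] : Fin 2 → ℝ) 0) = b := by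
      filter_upwards [eventually_ne_atTop 0] with n hn
      have hnr : ((n:ℝ)) ≠ 0 := Nat.cast_ne_zero.mpr hn
      simp only [Matrix.cons_val_zero, htdef, if_neg hn, Real.log_exp]
      field_simp
    rw [liminf_congr heq, liminf_const]
end
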